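/- arXiv:2006.01020 — 8 statements merged into one kernel-verified Lean document; each statement's English description precedes it below -/
import Mathlib

section
/- The order of a strict bramble equals its scramble order. -/
/-- A finite multigraph on vertex set `V`: `mul u v` is the number of
parallel edges between `u` and `v`; there are no loops. -/
structure Multigraph (V : Type) where
  mul : V → V → ℕ
  symm : ∀ u v, mul u v = mul v u
  loopless : ∀ v, mul v v = 0

namespace Multigraph

variable {V : Type}

/-- Adjacency in a multigraph. -/
def Adj (G : Multigraph V) (u v : V) : Prop := 0 < G.mul u v

/-- The underlying simple graph of a multigraph. -/
def simple (G : Multigraph V) : SimpleGraph V where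
  Adj u v := 0 < G.mul u v
  symm := ⟨fun u v h => by simpa [G.symm u v] using h⟩
  loopless := ⟨fun v h => by simp [G.loopless] at h⟩

/-- A multigraph is connected if its underlying simple graph is. -/
def Connected (G : Multigraph V) : Prop := G.simple.Connected

/-- A (nonempty) connected subset of the vertices of a multigraph. -/
def ConnSubset (G : Multigraph V) (B : Finset V) : Prop :=
  B.Nonempty ∧ (SimpleGraph.induce (B : Set V) G.simple).Connected

variable [Fintype V] [DecidableEq V]

/-- The number of edges between `A` and its complement. -/
def cut (G : Multigraph V) (A : Finset V) : ℕ :=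
  ∑ u ∈ A, ∑ v ∈ Aᶜ, G.mul u v

/-- A scramble: a collection of eggs, each a nonempty connected vertex subset. -/
def IsScramble (G : Multigraph V) (S : Finset (Finset V)) : Prop :=
  ∀ E ∈ S, G.ConnSubset E

/-- A hitting set for a scramble: a set of vertices meeting every egg. -/
def IsHitting (S : Finset (Finset V)) (C : Finset V) : Prop :=
  ∀ E ∈ S, (E ∩ C).Nonempty

/-- `k` is a valid order for the scramble `S` if no hitting set has fewer than `k`
vertices, and every vertex set `A` containing an egg, with an egg in its
complement, has at least `k` crossing edges. -/
def ValidOrder (G : Multigraph V) (S : Finset (Finset V)) (k : ℕ) : Prop :=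
  (∀ C : Finset V, IsHitting S C → k ≤ C.card) ∧
  (∀ A : Finset V, (∃ E ∈ S, E ⊆ A) → (∃ E' ∈ S, E' ⊆ Aᶜ) → k ≤ G.cut A)

/-- The scramble order `‖S‖`: the largest valid order. -/
noncomputable def scrambleOrder (G : Multigraph V) (S : Finset (Finset V)) : ℕ :=
  sSup {k | ValidOrder G S k}

/-- The scramble number of a multigraph: the maximum scramble order of a scramble. -/
noncomputable def scrambleNumber (G : Multigraph V) : ℕ :=
  sSup {n | ∃ S, IsScramble G S ∧ scrambleOrder G S = n}

end Multigraph

namespace Multigraph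

variable {V : Type} [Fintype V] [DecidableEq V]

/-- A bramble: a scramble in which the union of any two eggs is connected. -/
def IsBramble (G : Multigraph V) (S : Finset (Finset V)) : Prop :=
  IsScramble G S ∧ ∀ E ∈ S, ∀ E' ∈ S, G.ConnSubset (E ∪ E')

/-- A strict bramble: a bramble in which any two eggs intersect. -/
def IsStrictBramble (G : Multigraph V) (S : Finset (Finset V)) : Prop :=
  IsBramble G S ∧ ∀ E ∈ S, ∀ E' ∈ S, (E ∩ E').Nonempty

/-- The order of a bramble: the minimum size of a hitting set. -/
noncomputable def brambleOrder (S : Finset (Finset V)) : ℕ :=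
  sInf {n | ∃ C : Finset V, IsHitting S C ∧ C.card = n}

end Multigraph

open Multigraph in
/-- The order of a strict bramble equals its scramble order. -/
theorem order_eq_scrambleOrder_of_strictBramble {V : Type} [Fintype V] [DecidableEq V]
    (G : Multigraph V) (hG : G.Connected) (S : Finset (Finset V))
    (hS : IsStrictBramble G S) :
    brambleOrder S = scrambleOrder G S := by
  classical
  -- The set of cardinalities of hitting sets is nonempty (univ is a hitting set).
  have hunivhit : IsHitting S (Finset.univ : Finset V) := by
    intro E hE
    obtain ⟨x, hx⟩ := (hS.1.1 E hE).1
    exact ⟨x, Finset.mem_inter.2 ⟨hx, Finset.mem_univ x⟩⟩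
  have hne : {n | ∃ C : Finset V, IsHitting S C ∧ C.card = n}.Nonempty :=
    ⟨(Finset.univ : Finset V).card, Finset.univ, hunivhit, rfl⟩
  obtain ⟨C₀, hC₀, hC₀card⟩ := Nat.sInf_mem hne
  -- The bramble order is a valid order.
  have hvalid : ValidOrder G S (brambleOrder S) := by
    constructor
    · intro C hC
      exact Nat.sInf_le ⟨C, hC, rfl⟩
    · intro A ⟨E, hE, hEA⟩ ⟨E', hE', hE'A⟩
      obtain ⟨x, hx⟩ := hS.2 E hE E' hE'
      rw [Finset.mem_inter] at hx
      have h1 : x ∈ A := hEA hx.1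
      have h2 : x ∈ Aᶜ := hE'A hx.2
      exact absurd h1 (Finset.mem_compl.1 h2)
  -- Every valid order is at most the bramble order.
  have hbdd : ∀ k ∈ {k | ValidOrder G S k}, k ≤ brambleOrder S := by
    intro k hk
    have := hk.1 C₀ hC₀
    unfold brambleOrder
    omega
  refine le_antisymm ?_ ?_
  · exact le_csSup ⟨brambleOrder S, hbdd⟩ hvalid
  · exact csSup_le ⟨brambleOrder S, hvalid⟩ hbdd
end

section
/- If B is a bramble of order k in a graph G, then the scramble order of B is either k or k−1. -/
open Multigraph in
private lemma exists_crossing_adj {V : Type} (G : Multigraph V) {F : Finset V}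
    (h : G.ConnSubset F) {A : Finset V} {x y : V} (hx : x ∈ F) (hxA : x ∈ A)
    (hy : y ∈ F) (hyA : y ∉ A) :
    ∃ u v, u ∈ F ∧ v ∈ F ∧ u ∈ A ∧ v ∉ A ∧ G.Adj u v := by
  obtain ⟨-, hconn⟩ := h
  obtain ⟨p⟩ := hconn.preconnected ⟨x, by simpa using hx⟩ ⟨y, by simpa using hy⟩
  obtain ⟨d, _, hfst, hsnd⟩ := p.exists_boundary_dart {z : (F : Set V) | (z : V) ∈ A} hxA hyA
  exact ⟨d.fst, d.snd, by simpa using d.fst.2, by simpa using d.snd.2, hfst, hsnd, by simpa [Multigraph.Adj, Multigraph.simple] using d.adj⟩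

open Multigraph in
private lemma exists_hitting_le_cut {V : Type} [Fintype V] [DecidableEq V]
    (G : Multigraph V) (S : Finset (Finset V)) (hS : IsBramble G S)
    (A : Finset V) (E : Finset V) (hE : E ∈ S) (hEA : E ⊆ A)
    (E' : Finset V) (hE' : E' ∈ S) (hE'A : E' ⊆ Aᶜ) :
    ∃ C : Finset V, IsHitting S C ∧ C.card ≤ G.cut A + 1 := by
  classical
  set P : Finset (V × V) := (A ×ˢ Aᶜ).filter (fun p => G.Adj p.1 p.2) with hP
  have hPcard : P.card ≤ G.cut A := by
    have h1 : P.card ≤ ∑ p ∈ P, G.mul p.1 p.2 := by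
      rw [Finset.card_eq_sum_ones]
      refine Finset.sum_le_sum (fun p hp => ?_)
      have := (Finset.mem_filter.1 hp).2
      exact this
    have h2 : ∑ p ∈ P, G.mul p.1 p.2 ≤ ∑ p ∈ A ×ˢ Aᶜ, G.mul p.1 p.2 :=
      Finset.sum_le_sum_of_subset (Finset.filter_subset _ _)
    have h3 : ∑ p ∈ A ×ˢ Aᶜ, G.mul p.1 p.2 = G.cut A := by
      rw [Multigraph.cut, Finset.sum_product]
    omega
  set edg : Finset V → Finset (V × V) := fun F => P.filter (fun p => p.1 ∈ F) with hedg
  have hET : E ∈ S.filter (· ⊆ A) := Finset.mem_filter.2 ⟨hE, hEA⟩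
  obtain ⟨F0, hF0T, hmin⟩ :=
    Finset.exists_min_image (S.filter (· ⊆ A)) (fun F => (edg F).card) ⟨E, hET⟩
  obtain ⟨hF0S, hF0A⟩ := Finset.mem_filter.1 hF0T
  have hF0A : F0 ⊆ A := hF0A
  obtain ⟨x0, hx0⟩ := (hS.1 F0 hF0S).1
  obtain ⟨y0, hy0⟩ := (hS.1 E' hE').1
  have hy0A : y0 ∉ A := by
    have := hE'A hy0; simpa using this
  obtain ⟨u, v, huF, hvF, huA, hvA, hadj⟩ :=
    exists_crossing_adj G (hS.2 F0 hF0S E' hE')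
      (Finset.mem_union_left _ hx0) (hF0A hx0) (Finset.mem_union_right _ hy0) hy0A
  have huF0 : u ∈ F0 := by
    rcases Finset.mem_union.1 huF with h | h
    · exact h
    · exact absurd (by simpa using hE'A h : u ∉ A) (by simpa using huA)
  have hePmem : (u, v) ∈ P := by
    refine Finset.mem_filter.2 ⟨Finset.mem_product.2 ⟨huA, Finset.mem_compl.2 hvA⟩, hadj⟩
  have he : (u, v) ∈ edg F0 := Finset.mem_filter.2 ⟨hePmem, huF0⟩
  set f : V × V → V := fun p => if p ∈ edg F0 then p.2 else p.1 with hf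
  refine ⟨insert u (P.image f), ?_, ?_⟩
  · intro F hF
    by_cases hFA : F ⊆ A
    · by_cases hsub : edg F ⊆ edg F0
      · have heq : edg F = edg F0 :=
          Finset.eq_of_subset_of_card_le hsub (hmin F (Finset.mem_filter.2 ⟨hF, hFA⟩))
        have : (u, v) ∈ edg F := heq ▸ he
        exact ⟨u, Finset.mem_inter.2 ⟨(Finset.mem_filter.1 this).2, Finset.mem_insert_self _ _⟩⟩
      · obtain ⟨p, hpF, hpF0⟩ := Finset.not_subset.1 hsub
        obtain ⟨hpP, hp1F⟩ := Finset.mem_filter.1 hpF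
        have hfp : f p = p.1 := if_neg hpF0
        refine ⟨p.1, Finset.mem_inter.2 ⟨hp1F, Finset.mem_insert_of_mem ?_⟩⟩
        exact Finset.mem_image.2 ⟨p, hpP, hfp⟩
    · obtain ⟨y, hyF, hyA⟩ := Finset.not_subset.1 hFA
      obtain ⟨u', v', hu'F, hv'F, hu'A, hv'A, hadj'⟩ :=
        exists_crossing_adj G (hS.2 F hF F0 hF0S)
          (Finset.mem_union_right _ hx0) (hF0A hx0) (Finset.mem_union_left _ hyF) hyA
      have hv'F : v' ∈ F := by
        rcases Finset.mem_union.1 hv'F with h | h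
        · exact h
        · exact absurd (hF0A h) hv'A
      have hpP : (u', v') ∈ P :=
        Finset.mem_filter.2 ⟨Finset.mem_product.2 ⟨hu'A, Finset.mem_compl.2 hv'A⟩, hadj'⟩
      by_cases hp0 : (u', v') ∈ edg F0
      · refine ⟨v', Finset.mem_inter.2 ⟨hv'F, Finset.mem_insert_of_mem ?_⟩⟩
        exact Finset.mem_image.2 ⟨(u', v'), hpP, if_pos hp0⟩
      · have hu'F : u' ∈ F := by
          rcases Finset.mem_union.1 hu'F with h | h
          · exact h
          · exact absurd (Finset.mem_filter.2 ⟨hpP, h⟩) hp0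
        refine ⟨u', Finset.mem_inter.2 ⟨hu'F, Finset.mem_insert_of_mem ?_⟩⟩
        exact Finset.mem_image.2 ⟨(u', v'), hpP, if_neg hp0⟩
  · calc (insert u (P.image f)).card ≤ (P.image f).card + 1 := Finset.card_insert_le _ _
      _ ≤ P.card + 1 := by have := Finset.card_image_le (s := P) (f := f); omega
      _ ≤ G.cut A + 1 := by omega

open Multigraph in
/-- If `B` is a bramble of order `k`, then its scramble order is `k` or `k - 1`. -/
theorem scrambleOrder_of_bramble {V : Type} [Fintype V] [DecidableEq V]
    (G : Multigraph V) (hG : G.Connected) (S : Finset (Finset V)) (k : ℕ)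
    (hS : IsBramble G S) (hk : brambleOrder S = k) :
    scrambleOrder G S = k ∨ scrambleOrder G S = k - 1 :=  by
  classical
  set H : Set ℕ := {n | ∃ C : Finset V, IsHitting S C ∧ C.card = n} with hH
  have hHne : H.Nonempty := by
    refine ⟨(Finset.univ : Finset V).card, Finset.univ, fun E hE => ?_, rfl⟩
    simpa [Finset.inter_univ] using (hS.1 E hE).1
  have hkH : k ∈ H := by
    have := Nat.sInf_mem hHne
    rwa [show sInf H = k from hk] at this
  obtain ⟨C0, hC0, hC0card⟩ := hkH
  have hub : ∀ m, ValidOrder G S m → m ≤ k := fun m hm => hC0card ▸ hm.1 C0 hC0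
  have h0 : ValidOrder G S 0 := ⟨fun _ _ => Nat.zero_le _, fun _ _ _ => Nat.zero_le _⟩
  have hbdd : BddAbove {m | ValidOrder G S m} := ⟨k, fun m hm => hub m hm⟩
  have hk1 : ValidOrder G S (k - 1) := by
    constructor
    · intro C hC
      have h1 : sInf H ≤ C.card := Nat.sInf_le ⟨C, hC, rfl⟩
      rw [show sInf H = k from hk] at h1
      omega
    · rintro A ⟨E, hE, hEA⟩ ⟨E', hE', hE'A⟩
      obtain ⟨C, hC, hCle⟩ := exists_hitting_le_cut G S hS A E hE hEA E' hE' hE'A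
      have h1 : sInf H ≤ C.card := Nat.sInf_le ⟨C, hC, rfl⟩
      rw [show sInf H = k from hk] at h1
      omega
  have hsup := Nat.sSup_mem (s := {m | ValidOrder G S m}) ⟨0, h0⟩ hbdd
  have h1 : scrambleOrder G S ≤ k := hub _ hsup
  have h2 : k - 1 ≤ scrambleOrder G S := le_csSup hbdd (by exact hk1)
  omega
end

section
/- If B is a bramble in a graph G, E, E' ∈ B, and A ⊆ V(G) satisfies E ⊆ A and E' ⊆ A^c, then the number of edges between A and A^c is at least (order of B) − 1. -/
open Multigraph in
/-- If `B` is a bramble, `E, E' ∈ B`, and `A` satisfies `E ⊆ A`, `E' ⊆ Aᶜ`, then the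
number of edges between `A` and `Aᶜ` is at least the order of `B` minus one. -/
theorem cut_ge_brambleOrder_sub_one {V : Type} [Fintype V] [DecidableEq V]
    (G : Multigraph V) (hG : G.Connected) (S : Finset (Finset V))
    (hS : IsBramble G S) (E E' : Finset V) (hE : E ∈ S) (hE' : E' ∈ S)
    (A : Finset V) (h1 : E ⊆ A) (h2 : E' ⊆ Aᶜ) :
    brambleOrder S - 1 ≤ G.cut A := by
  classical
  set X : Finset (V × V) := (A ×ˢ Aᶜ).filter (fun p => 0 < G.mul p.1 p.2) with hXdef
  have memX : ∀ p : V × V, p ∈ X → p.1 ∈ A ∧ p.2 ∉ A := by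
    intro p hp
    have h := Finset.mem_product.mp (Finset.mem_filter.mp hp).1
    exact ⟨h.1, Finset.mem_compl.mp h.2⟩
  -- crossing edge existence in a connected subset meeting both sides
  have cross : ∀ W : Finset V, (SimpleGraph.induce (W : Set V) G.simple).Connected →
      ∀ a ∈ W, ∀ b ∈ W, a ∈ A → b ∉ A →
      ∃ p : V × V, p ∈ X ∧ p.1 ∈ W ∧ p.2 ∈ W := by
    intro W hW a haW b hbW haA hbA
    have haW' : a ∈ (W : Set V) := haW
    have hbW' : b ∈ (W : Set V) := hbW
    obtain ⟨w⟩ := hW.preconnected ⟨a, haW'⟩ ⟨b, hbW'⟩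
    obtain ⟨d, _, hd1, hd2⟩ := w.exists_boundary_dart {x | (x : V) ∈ A} haA hbA
    have hadj : G.simple.Adj (d.toProd.1 : V) (d.toProd.2 : V) := d.adj
    refine ⟨((d.toProd.1 : V), (d.toProd.2 : V)), ?_, d.toProd.1.2, d.toProd.2.2⟩
    simp only [hXdef, Finset.mem_filter, Finset.mem_product, Finset.mem_compl]
    exact ⟨⟨hd1, hd2⟩, by simpa [Multigraph.simple] using hadj⟩
  have hE'ne : E'.Nonempty := (hS.1 E' hE').1
  have hEne : E.Nonempty := (hS.1 E hE).1
  -- property P: every egg inside A contains the A-endpoint of a crossing edge outside T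
  set P : Finset (V × V) → Prop :=
    (fun T => ∀ F ∈ S, F ⊆ A → ∃ p ∈ X, p ∉ T ∧ p.1 ∈ F) with hPdef
  have hPempty : P ∅ := by
    intro F hF hFA
    obtain ⟨a, haF⟩ := (hS.1 F hF).1
    obtain ⟨b, hbE'⟩ := hE'ne
    obtain ⟨p, hpX, hp1, _⟩ := cross (F ∪ E') (hS.2 F hF E' hE').2
      a (Finset.mem_union_left _ haF) b (Finset.mem_union_right _ hbE')
      (hFA haF) (Finset.mem_compl.mp (h2 hbE'))
    refine ⟨p, hpX, Finset.notMem_empty _, ?_⟩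
    rcases Finset.mem_union.mp hp1 with h | h
    · exact h
    · exact absurd (memX p hpX).1 (Finset.mem_compl.mp (h2 h))
  -- choose T ⊆ X of maximal cardinality with P T
  set 𝒯 : Finset (Finset (V × V)) := X.powerset.filter P with h𝒯def
  have h𝒯ne : 𝒯.Nonempty := ⟨∅, by
    simp only [h𝒯def, Finset.mem_filter, Finset.mem_powerset]
    exact ⟨Finset.empty_subset _, hPempty⟩⟩
  obtain ⟨T, hT𝒯, hTmax⟩ := Finset.exists_max_image 𝒯 Finset.card h𝒯ne
  have hTX : T ⊆ X := Finset.mem_powerset.mp (Finset.mem_filter.mp hT𝒯).1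
  have hPT : P T := (Finset.mem_filter.mp hT𝒯).2
  -- T ≠ X, since E ⊆ A is an egg
  have hTne : T ≠ X := by
    intro h
    obtain ⟨p, hpX, hpT, _⟩ := hPT E hE h1
    exact hpT (h ▸ hpX)
  obtain ⟨j, hjX, hjT⟩ := Finset.exists_of_ssubset (hTX.ssubset_of_ne hTne)
  -- maximality: P (insert j T) fails
  have hnP : ¬ P (insert j T) := by
    intro h
    have hmem : insert j T ∈ 𝒯 := by
      simp only [h𝒯def, Finset.mem_filter, Finset.mem_powerset]
      exact ⟨Finset.insert_subset hjX hTX, h⟩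
    have := hTmax _ hmem
    have := Finset.card_insert_of_notMem hjT
    omega
  -- the bad egg F_j
  simp only [hPdef, not_forall] at hnP
  obtain ⟨Fj, hFj, hFjA, hFjprop⟩ := hnP
  have hFjprop' : ∀ p ∈ X, p.1 ∈ Fj → p ∈ insert j T := by
    intro p hp hp1
    by_contra hc
    exact hFjprop ⟨p, hp, hc, hp1⟩
  -- the hitting set
  set C : Finset V := (X \ T).image Prod.fst ∪ T.image Prod.snd ∪ {j.2} with hCdef
  have hhit : IsHitting S C := by
    intro F hF
    by_cases hFA : F ⊆ A
    · obtain ⟨p, hpX, hpT, hp1⟩ := hPT F hF hFA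
      exact ⟨p.1, Finset.mem_inter.mpr ⟨hp1, by
        simp only [hCdef, Finset.mem_union, Finset.mem_image]
        exact Or.inl (Or.inl ⟨p, Finset.mem_sdiff.mpr ⟨hpX, hpT⟩, rfl⟩)⟩⟩
    · by_cases hFA2 : ∃ x ∈ F, x ∈ A
      · -- mixed egg: has an internal crossing edge
        obtain ⟨a, haF, haA⟩ := hFA2
        obtain ⟨b, hbF, hbA⟩ := Finset.not_subset.mp hFA
        obtain ⟨p, hpX, hp1, hp2⟩ := cross F (hS.1 F hF).2 a haF b hbF haA hbA
        by_cases hpT : p ∈ T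
        · exact ⟨p.2, Finset.mem_inter.mpr ⟨hp2, by
            simp only [hCdef, Finset.mem_union, Finset.mem_image]
            exact Or.inl (Or.inr ⟨p, hpT, rfl⟩)⟩⟩
        · exact ⟨p.1, Finset.mem_inter.mpr ⟨hp1, by
            simp only [hCdef, Finset.mem_union, Finset.mem_image]
            exact Or.inl (Or.inl ⟨p, Finset.mem_sdiff.mpr ⟨hpX, hpT⟩, rfl⟩)⟩⟩
      · -- F ⊆ Aᶜ: use the bad egg Fj
        push_neg at hFA2
        obtain ⟨a, haF⟩ := (hS.1 F hF).1
        obtain ⟨b, hbFj⟩ := (hS.1 Fj hFj).1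
        obtain ⟨p, hpX, hp1, hp2⟩ := cross (Fj ∪ F) (hS.2 Fj hFj F hF).2
          b (Finset.mem_union_left _ hbFj) a (Finset.mem_union_right _ haF)
          (hFjA hbFj) (hFA2 a haF)
        have hp1A := (memX p hpX).1
        have hp2A := (memX p hpX).2
        have hp1Fj : p.1 ∈ Fj := by
          rcases Finset.mem_union.mp hp1 with h | h
          · exact h
          · exact absurd hp1A (hFA2 _ h)
        have hp2F : p.2 ∈ F := by
          rcases Finset.mem_union.mp hp2 with h | h
          · exact absurd (hFjA h) hp2A
          · exact h
        have := hFjprop' p hpX hp1Fj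
        rcases Finset.mem_insert.mp this with h | h
        · exact ⟨p.2, Finset.mem_inter.mpr ⟨hp2F, by
            simp only [hCdef, Finset.mem_union, Finset.mem_singleton]
            exact Or.inr (by rw [h])⟩⟩
        · exact ⟨p.2, Finset.mem_inter.mpr ⟨hp2F, by
            simp only [hCdef, Finset.mem_union, Finset.mem_image]
            exact Or.inl (Or.inr ⟨p, h, rfl⟩)⟩⟩
  -- cardinality bound
  have hcard : C.card ≤ X.card + 1 := by
    calc C.card ≤ ((X \ T).image Prod.fst ∪ T.image Prod.snd).card + ({j.2} : Finset V).card :=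
          Finset.card_union_le _ _
      _ ≤ ((X \ T).image Prod.fst).card + (T.image Prod.snd).card + 1 := by
          have := Finset.card_union_le ((X \ T).image (Prod.fst : V × V → V)) (T.image Prod.snd)
          simp only [Finset.card_singleton]
          omega
      _ ≤ (X \ T).card + T.card + 1 := by
          have h1' := Finset.card_image_le (s := X \ T) (f := (Prod.fst : V × V → V))
          have h2' := Finset.card_image_le (s := T) (f := (Prod.snd : V × V → V))
          omega
      _ = X.card + 1 := by rw [Finset.card_sdiff_add_card_eq_card hTX]
  have hXcut : X.card ≤ G.cut A := by
    have h1' : X.card = ∑ p ∈ X, 1 := by simp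
    have h2' : ∑ p ∈ X, 1 ≤ ∑ p ∈ X, G.mul p.1 p.2 := by
      apply Finset.sum_le_sum
      intro p hp
      exact (Finset.mem_filter.mp hp).2
    have h3' : ∑ p ∈ X, G.mul p.1 p.2 ≤ ∑ p ∈ A ×ˢ Aᶜ, G.mul p.1 p.2 :=
      Finset.sum_le_sum_of_subset (Finset.filter_subset _ _)
    have h4' : ∑ p ∈ A ×ˢ Aᶜ, G.mul p.1 p.2 = G.cut A := by
      rw [Multigraph.cut, Finset.sum_product]
    omega
  have hbo : brambleOrder S ≤ C.card := Nat.sInf_le ⟨C, hhit, rfl⟩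
  omega
end

section
/- For any connected multigraph G, the scramble number of G is at most the gonality of G. -/
namespace Multigraph

variable {V : Type} [Fintype V] [DecidableEq V]

/-- The degree of a divisor: the total number of chips. -/
def deg (D : V → ℤ) : ℤ := ∑ v, D v

/-- A divisor is effective if no vertex is in debt. -/
def Effective (D : V → ℤ) : Prop := ∀ v, 0 ≤ D v

/-- Chip-firing the vertex subset `A`: every vertex of `A` sends a chip along
each edge to the complement of `A`. -/
def fire (G : Multigraph V) (A : Finset V) (D : V → ℤ) : V → ℤ :=
  fun v => if v ∈ A then D v - ∑ u ∈ Aᶜ, (G.mul v u : ℤ)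
           else D v + ∑ u ∈ A, (G.mul v u : ℤ)

/-- Equivalence of divisors: generated by chip-firing vertex subsets. -/
def LinEq (G : Multigraph V) : (V → ℤ) → (V → ℤ) → Prop :=
  Relation.ReflTransGen (fun X Y => ∃ A : Finset V, Y = G.fire A X)

/-- A divisor has positive rank if for every vertex `v` there is an equivalent
effective divisor with a chip on `v`. -/
def PositiveRank (G : Multigraph V) (D : V → ℤ) : Prop :=
  ∀ v : V, ∃ D' : V → ℤ, LinEq G D D' ∧ Effective D' ∧ 1 ≤ D' v

/-- The gonality of a multigraph: the minimum degree of an effective divisor of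
positive rank. -/
noncomputable def gonality (G : Multigraph V) : ℕ :=
  sInf {n : ℕ | ∃ D : V → ℤ, Effective D ∧ PositiveRank G D ∧ deg D = (n : ℤ)}

end Multigraph


-- ===================== auxiliary development =====================
set_option linter.unusedSectionVars false
set_option maxHeartbeats 1000000

namespace Multigraph

variable {V : Type} [Fintype V] [DecidableEq V]

/-- The graph Laplacian applied to an integer function. -/
def lap (G : Multigraph V) (h : V → ℤ) : V → ℤ :=
  fun v => ∑ u, (G.mul v u : ℤ) * (h v - h u)

lemma lap_add (G : Multigraph V) (h₁ h₂ : V → ℤ) (v : V) :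
    G.lap (fun u => h₁ u + h₂ u) v = G.lap h₁ v + G.lap h₂ v := by
  unfold lap
  rw [← Finset.sum_add_distrib]
  exact Finset.sum_congr rfl fun u _ => by ring

lemma lap_zero (G : Multigraph V) (v : V) : G.lap (fun _ => (0:ℤ)) v = 0 := by
  unfold lap; simp

lemma sum_lap (G : Multigraph V) (h : V → ℤ) : ∑ v, G.lap h v = 0 := by
  unfold lap
  have h1 : ∑ v, ∑ u, (G.mul v u : ℤ) * (h v - h u)
      = (∑ v, ∑ u, (G.mul v u : ℤ) * h v) - ∑ v, ∑ u, (G.mul v u : ℤ) * h u := by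
    rw [← Finset.sum_sub_distrib]
    refine Finset.sum_congr rfl fun v _ => ?_
    rw [← Finset.sum_sub_distrib]
    exact Finset.sum_congr rfl fun u _ => by ring
  rw [h1, sub_eq_zero, Finset.sum_comm]
  refine Finset.sum_congr rfl fun v _ => Finset.sum_congr rfl fun u _ => ?_
  rw [G.symm]

lemma fire_eq (G : Multigraph V) (A : Finset V) (D : V → ℤ) (v : V) :
    G.fire A D v = D v - G.lap (fun u => if u ∈ A then (1:ℤ) else 0) v := by
  unfold fire lap
  by_cases hv : v ∈ A
  · simp only [hv, if_true]
    congr 1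
    have h1 : ∀ u : V, (G.mul v u : ℤ) * ((1:ℤ) - (if u ∈ A then (1:ℤ) else 0))
        = (if u ∈ Aᶜ then (G.mul v u : ℤ) else 0) := by
      intro u; by_cases hu : u ∈ A <;> simp [hu]
    rw [Finset.sum_congr rfl (fun u _ => h1 u), Finset.sum_ite_mem, Finset.univ_inter]
  · simp only [hv, if_false]
    have h1 : ∀ u : V, (G.mul v u : ℤ) * ((0:ℤ) - (if u ∈ A then (1:ℤ) else 0))
        = -(if u ∈ A then (G.mul v u : ℤ) else 0) := by
      intro u; by_cases hu : u ∈ A <;> simp [hu]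
    rw [Finset.sum_congr rfl (fun u _ => h1 u)]
    rw [Finset.sum_neg_distrib, Finset.sum_ite_mem, Finset.univ_inter, sub_neg_eq_add]


lemma fire_fire_compl (G : Multigraph V) (A : Finset V) (D : V → ℤ) :
    G.fire Aᶜ (G.fire A D) = D := by
  funext v
  by_cases hv : v ∈ A
  · have hv' : v ∉ Aᶜ := by simp [hv]
    simp only [fire, hv, hv', if_true, if_false, compl_compl]
    ring
  · have hv' : v ∈ Aᶜ := by simp [hv]
    simp only [fire, hv, hv', if_true, if_false, compl_compl]
    ring

lemma linEq_symm {G : Multigraph V} {D D' : V → ℤ} (h : LinEq G D D') : LinEq G D' D := by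
  induction h with
  | refl => exact Relation.ReflTransGen.refl
  | tail _ hbc ih =>
      obtain ⟨A, rfl⟩ := hbc
      exact Relation.ReflTransGen.trans
        (Relation.ReflTransGen.single ⟨Aᶜ, (G.fire_fire_compl A _).symm⟩) ih

lemma linEq_script_exists {G : Multigraph V} {D D' : V → ℤ} (h : LinEq G D D') :
    ∃ f : V → ℤ, ∀ v, D' v = D v - G.lap f v := by
  induction h with
  | refl => exact ⟨fun _ => 0, fun v => by rw [G.lap_zero]; ring⟩
  | tail _ hbc ih =>
      obtain ⟨f, hf⟩ := ih
      obtain ⟨A, rfl⟩ := hbc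
      refine ⟨fun u => f u + (if u ∈ A then (1:ℤ) else 0), fun v => ?_⟩
      rw [G.fire_eq, hf v, G.lap_add]
      ring

lemma linEq_script_nat (G : Multigraph V) (D : V → ℤ) (f : V → ℕ) :
    LinEq G D (fun v => D v - G.lap (fun u => (f u : ℤ)) v) := by
  suffices H : ∀ n (f : V → ℕ), ∑ v, f v = n →
      LinEq G D (fun v => D v - G.lap (fun u => (f u : ℤ)) v) from H _ f rfl
  intro n
  induction n using Nat.strong_induction_on with
  | _ n ih =>
    intro f hf
    by_cases h0 : ∀ v, f v = 0
    · have hfz : (fun v => D v - G.lap (fun u => (f u : ℤ)) v) = D := by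
        funext v
        have h1 : (fun u => ((f u : ℤ))) = fun _ => (0:ℤ) := funext fun u => by rw [h0 u]; rfl
        rw [h1, G.lap_zero]; ring
      rw [hfz]
      exact Relation.ReflTransGen.refl
    · push_neg at h0
      obtain ⟨w, hw⟩ := h0
      classical
      set A := Finset.univ.filter (fun v => f v ≠ 0) with hA
      set f' := fun v => f v - (if v ∈ A then 1 else 0) with hf'
      have hmemA : ∀ v, v ∈ A ↔ f v ≠ 0 := by intro v; simp [hA]
      have hdec : ∀ v, (f v : ℤ) = (f' v : ℤ) + (if v ∈ A then (1:ℤ) else 0) := by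
        intro v
        by_cases hv : v ∈ A
        · have h1 : 1 ≤ f v := Nat.one_le_iff_ne_zero.mpr ((hmemA v).mp hv)
          simp only [hf', hv, if_true]
          rw [Nat.cast_sub h1]
          push_cast; ring
        · have h1 : f v = 0 := by
            by_contra hne; exact hv ((hmemA v).mpr hne)
          simp [hf', hv, h1]
      have hsum : ∑ v, f' v < n := by
        rw [← hf]
        apply Finset.sum_lt_sum (fun i _ => Nat.sub_le _ _)
        refine ⟨w, Finset.mem_univ w, ?_⟩
        have hwA : w ∈ A := (hmemA w).mpr hw
        simp only [hf', hwA, if_true]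
        omega
      have h1 := ih _ hsum f' rfl
      refine Relation.ReflTransGen.tail h1 ⟨A, ?_⟩
      funext v
      rw [G.fire_eq]
      have h2 : G.lap (fun u => (f u : ℤ)) v
          = G.lap (fun u => (f' u : ℤ)) v + G.lap (fun u => if u ∈ A then (1:ℤ) else 0) v := by
        rw [← G.lap_add]
        have := funext hdec
        exact congrFun (congrArg G.lap this) v
      rw [h2]
      ring

lemma linEq_reach_deg {G : Multigraph V} {D D' : V → ℤ} (h : LinEq G D D') :
    ∑ v, D' v = ∑ v, D v := by
  obtain ⟨f, hf⟩ := linEq_script_exists h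
  calc ∑ v, D' v = ∑ v, (D v - G.lap f v) := Finset.sum_congr rfl fun v _ => hf v
  _ = ∑ v, D v - ∑ v, G.lap f v := by rw [Finset.sum_sub_distrib]
  _ = ∑ v, D v := by rw [G.sum_lap]; ring

/-- From a walk between a vertex satisfying `P` and one not satisfying it,
extract a crossing edge. -/
lemma crossing_edge {α : Type*} {H : SimpleGraph α} {P : α → Prop} {a b : α}
    (p : H.Walk a b) : ¬ P b → P a → ∃ x y, H.Adj x y ∧ P x ∧ ¬ P y := by
  induction p with
  | nil => intro hb ha; exact absurd ha hb
  | @cons u v w h q ih =>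
      intro hb ha
      by_cases hv : P v
      · exact ih hb hv
      · exact ⟨u, v, h, ha, hv⟩

/-- A chipless connected set containing an unfired vertex cannot intersect a
legally fired set. -/
lemma no_fire_of_chipless (G : Multigraph V) {X : Finset V}
    (hX : G.ConnSubset X) {q : V} (hq : q ∈ X) {W : Finset V} (hqW : q ∉ W)
    {D : V → ℤ} (hchip : ∀ v ∈ X, D v = 0) (hleg : Effective (G.fire W D)) :
    ∀ v ∈ X, v ∉ W := by
  intro v hv hvW
  obtain ⟨-, hconn⟩ := hX
  obtain ⟨p⟩ := hconn.preconnected ⟨v, Finset.mem_coe.mpr hv⟩ ⟨q, Finset.mem_coe.mpr hq⟩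
  obtain ⟨x, y, hadj, hxW, hyW⟩ :=
    crossing_edge (P := fun z : (X : Set V) => (z : V) ∈ W) p (by simpa using hqW)
      (by simpa using hvW)
  have hadj' : G.simple.Adj (x : V) (y : V) := hadj
  have hmul : 0 < G.mul (x : V) (y : V) := hadj'
  have hxX : (x : V) ∈ X := Finset.mem_coe.mp x.2
  have hle := hleg (x : V)
  simp only [fire, hxW, if_true] at hle
  rw [hchip _ hxX] at hle
  have hyc : (y : V) ∈ Wᶜ := Finset.mem_compl.mpr hyW
  have hterm : (G.mul (x : V) (y : V) : ℤ) ≤ ∑ u ∈ Wᶜ, (G.mul (x : V) u : ℤ) :=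
    Finset.single_le_sum (f := fun u => (G.mul (x : V) u : ℤ)) (fun i _ => by positivity) hyc
  have : (0:ℤ) < G.mul (x : V) (y : V) := by exact_mod_cast hmul
  omega


/-- One legal set-firing avoiding `q`. -/
def LStep (G : Multigraph V) (q : V) (D D' : V → ℤ) : Prop :=
  ∃ W : Finset V, W.Nonempty ∧ q ∉ W ∧ D' = G.fire W D ∧ Effective D'

/-- Reachability by legal set-firings avoiding `q`. -/
def Reach (G : Multigraph V) (q : V) : (V → ℤ) → (V → ℤ) → Prop :=
  Relation.ReflTransGen (G.LStep q)

lemma reach_linEq {G : Multigraph V} {q : V} {D D' : V → ℤ} (h : G.Reach q D D') :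
    LinEq G D D' :=
  Relation.ReflTransGen.mono (r := G.LStep q) (fun _ _ hs => by obtain ⟨W, _, _, hf, _⟩ := hs; exact ⟨W, hf⟩) _ _ h

lemma reach_effective {G : Multigraph V} {q : V} {D D' : V → ℤ} (h : G.Reach q D D')
    (hD : Effective D) : Effective D' := by
  induction h with
  | refl => exact hD
  | tail _ hbc ih => obtain ⟨W, _, _, _, hEff⟩ := hbc; exact hEff

lemma reach_script {G : Multigraph V} {q : V} {D D' : V → ℤ} (h : G.Reach q D D') :
    ∃ f : V → ℕ, f q = 0 ∧ ∀ v, D' v = D v - G.lap (fun u => (f u : ℤ)) v := by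
  induction h with
  | refl =>
      refine ⟨fun _ => 0, rfl, fun v => ?_⟩
      have h1 : (fun u : V => ((0:ℕ) : ℤ)) = fun _ => (0:ℤ) := by funext u; simp
      rw [h1, G.lap_zero]; ring
  | tail _ hbc ih =>
      obtain ⟨f, hfq, hf⟩ := ih
      obtain ⟨W, -, hqW, rfl, -⟩ := hbc
      refine ⟨fun u => f u + (if u ∈ W then 1 else 0), by simp [hfq, hqW], fun v => ?_⟩
      rw [G.fire_eq, hf v]
      have h2 : G.lap (fun u => ((f u + if u ∈ W then 1 else 0 : ℕ) : ℤ)) v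
          = G.lap (fun u => (f u : ℤ)) v + G.lap (fun u => if u ∈ W then (1:ℤ) else 0) v := by
        rw [← G.lap_add]
        have h3 : (fun u => ((f u + if u ∈ W then 1 else 0 : ℕ) : ℤ))
            = fun u => (f u : ℤ) + (if u ∈ W then (1:ℤ) else 0) := by
          funext u; by_cases hu : u ∈ W <;> simp [hu]
        exact congrFun (congrArg G.lap h3) v
      rw [h2]; ring

/-- On a connected multigraph, functions with vanishing Laplacian are constant. -/
lemma const_of_lap_zero (G : Multigraph V) (hG : G.Connected) {h : V → ℤ}
    (hlap : ∀ v, G.lap h v = 0) : ∀ v u, h v = h u := by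
  have hne : Nonempty V := hG.nonempty
  obtain ⟨v₀, -, hmax⟩ := Finset.exists_max_image Finset.univ h
    ⟨Classical.arbitrary V, Finset.mem_univ _⟩
  have hclosed : ∀ a b, h a = h v₀ → G.simple.Adj a b → h b = h v₀ := by
    intro a b ha hab
    have h0 := hlap a
    have hnn : ∀ u ∈ Finset.univ, (0:ℤ) ≤ (G.mul a u : ℤ) * (h a - h u) := by
      intro u _
      have := hmax u (Finset.mem_univ u)
      have h2 : h u ≤ h a := by rw [ha]; exact this
      have : (0:ℤ) ≤ (G.mul a u : ℤ) := by positivity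
      nlinarith
    have hz := (Finset.sum_eq_zero_iff_of_nonneg hnn).mp h0 b (Finset.mem_univ b)
    have hmul : (0:ℤ) < (G.mul a b : ℤ) := by exact_mod_cast hab
    have : h a - h b = 0 := by
      rcases mul_eq_zero.mp hz with h' | h'
      · omega
      · exact h'
    omega
  have hall : ∀ v, h v = h v₀ := by
    intro v
    by_contra hv
    obtain ⟨p⟩ := hG.preconnected v₀ v
    obtain ⟨x, y, hadj, hx, hy⟩ := crossing_edge (P := fun z => h z = h v₀) p hv rfl
    exact hy (hclosed x y hx hadj)
  intro v u; rw [hall v, hall u]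

lemma reach_antisymm (G : Multigraph V) (hG : G.Connected) {q : V} {D D' : V → ℤ}
    (h1 : G.Reach q D D') (h2 : G.Reach q D' D) : D = D' := by
  obtain ⟨f, hfq, hf⟩ := reach_script h1
  obtain ⟨g, hgq, hg⟩ := reach_script h2
  have hz : ∀ v, G.lap (fun u => ((f u + g u : ℕ) : ℤ)) v = 0 := by
    intro v
    have e1 := hg v
    rw [hf v] at e1
    -- D v = D v - lap f v - lap g v
    have e2 : G.lap (fun u => (f u : ℤ)) v + G.lap (fun u => (g u : ℤ)) v = 0 := by omega
    have h3 : (fun u => ((f u + g u : ℕ) : ℤ)) = fun u => (f u : ℤ) + (g u : ℤ) := by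
      funext u; push_cast; ring
    rw [h3, G.lap_add]
    exact e2
  have hconst := G.const_of_lap_zero hG hz
  have hzero : ∀ v, f v = 0 ∧ g v = 0 := by
    intro v
    have := hconst v q
    simp only [hfq, hgq] at this
    have : (f v : ℤ) + (g v : ℤ) = 0 := by exact_mod_cast this
    omega
  funext v
  rw [hf v]
  have h1' : (fun u => ((f u) : ℤ)) = fun _ => (0:ℤ) := by
    funext u; rw [(hzero u).1]; rfl
  rw [h1', G.lap_zero]; ring

lemma fire_ne_self (G : Multigraph V) (hG : G.Connected) {q : V} {W : Finset V}
    (hWne : W.Nonempty) (hqW : q ∉ W) (D : V → ℤ) : G.fire W D ≠ D := by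
  intro hfe
  have hz : ∀ v, G.lap (fun u => if u ∈ W then (1:ℤ) else 0) v = 0 := by
    intro v
    have := congrFun hfe v
    rw [G.fire_eq] at this
    omega
  have hconst := G.const_of_lap_zero hG hz
  obtain ⟨w, hw⟩ := hWne
  have := hconst w q
  simp [hw, hqW] at this

lemma exists_terminal (G : Multigraph V) (hG : G.Connected) (q : V) (D : V → ℤ)
    (hD : Effective D) :
    ∃ D' : V → ℤ, G.Reach q D D' ∧ Effective D' ∧
      ∀ W : Finset V, W.Nonempty → q ∉ W → ¬ Effective (G.fire W D') := by
  classical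
  have hglob : Set.Finite {E : V → ℤ | Effective E ∧ ∑ v, E v = ∑ v, D v} := by
    apply Set.Finite.subset (Set.Finite.pi (fun _ : V => Set.finite_Icc (0:ℤ) (∑ v, D v)))
    intro E hE
    rw [Set.mem_pi]
    intro i _
    rw [Set.mem_Icc]
    refine ⟨hE.1 i, ?_⟩
    rw [← hE.2]
    exact Finset.single_le_sum (f := fun v => E v) (fun j _ => hE.1 j) (Finset.mem_univ i)
  have hsub : ∀ E : V → ℤ, G.Reach q D E →
      {E' | G.Reach q E E'} ⊆ {E' | Effective E' ∧ ∑ v, E' v = ∑ v, D v} := by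
    intro E hDE E' hEE'
    have h1 : G.Reach q D E' := hDE.trans hEE'
    exact ⟨reach_effective h1 hD, linEq_reach_deg (reach_linEq h1)⟩
  have key : ∀ n : ℕ, ∀ E : V → ℤ, G.Reach q D E →
      Set.ncard {E' | G.Reach q E E'} ≤ n →
      ∃ D' : V → ℤ, G.Reach q E D' ∧ Effective D' ∧
        ∀ W : Finset V, W.Nonempty → q ∉ W → ¬ Effective (G.fire W D') := by
    intro n
    induction n with
    | zero =>
        intro E hDE hcard
        exfalso
        have hfin : {E' | G.Reach q E E'}.Finite := hglob.subset (hsub E hDE)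
        have : E ∈ {E' | G.Reach q E E'} := Relation.ReflTransGen.refl
        have := (Set.ncard_pos hfin).mpr ⟨E, this⟩
        omega
    | succ n ih =>
        intro E hDE hcard
        by_cases hterm : ∀ W : Finset V, W.Nonempty → q ∉ W → ¬ Effective (G.fire W E)
        · exact ⟨E, Relation.ReflTransGen.refl, reach_effective hDE hD, hterm⟩
        · push_neg at hterm
          obtain ⟨W, hWne, hqW, hWeff⟩ := hterm
          set E₁ := G.fire W E with hE₁
          have hstep : G.LStep q E E₁ := ⟨W, hWne, hqW, rfl, hWeff⟩
          have hDE₁ : G.Reach q D E₁ := hDE.tail hstep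
          have hssub : {E' | G.Reach q E₁ E'} ⊂ {E' | G.Reach q E E'} := by
            rw [Set.ssubset_def]
            constructor
            · intro E' hE'
              exact (Relation.ReflTransGen.single hstep).trans hE'
            · intro hcontra
              have hEmem : E ∈ {E' | G.Reach q E E'} := Relation.ReflTransGen.refl
              have hE1E : G.Reach q E₁ E := hcontra hEmem
              have := reach_antisymm G hG (Relation.ReflTransGen.single hstep) hE1E
              exact G.fire_ne_self hG hWne hqW E this.symm
          have hlt : Set.ncard {E' | G.Reach q E₁ E'} < Set.ncard {E' | G.Reach q E E'} :=
            Set.ncard_lt_ncard hssub (hglob.subset (hsub E hDE))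
          obtain ⟨D', hr, hEff', hterm'⟩ := ih E₁ hDE₁ (by omega)
          exact ⟨D', (Relation.ReflTransGen.single hstep).trans hr, hEff', hterm'⟩
  obtain ⟨D', hr, hEff', hterm'⟩ := key (Set.ncard {E' | G.Reach q D E'}) D
    Relation.ReflTransGen.refl le_rfl
  exact ⟨D', hr, hEff', hterm'⟩


/-- A terminal divisor (no legal firing avoiding `q`) in a positive-rank class
has a chip at `q`. -/
lemma terminal_chip (G : Multigraph V) (hG : G.Connected) {q : V} {D₀ D' : V → ℤ}
    (hpr : PositiveRank G D₀) (hlin : LinEq G D₀ D') (hEff : Effective D')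
    (hterm : ∀ W : Finset V, W.Nonempty → q ∉ W → ¬ Effective (G.fire W D')) :
    1 ≤ D' q := by
  classical
  obtain ⟨D'', hlin'', hEff'', hq''⟩ := hpr q
  have hlinD : LinEq G D' D'' := (linEq_symm hlin).trans hlin''
  obtain ⟨h, hh⟩ := linEq_script_exists hlinD
  set h' : V → ℤ := fun v => h v - h q with hh'
  have hlap : ∀ v, G.lap h' v = G.lap h v := by
    intro v
    unfold lap
    exact Finset.sum_congr rfl fun u _ => by simp only [hh']; ring
  have hh2 : ∀ v, D'' v = D' v - G.lap h' v := fun v => by rw [hlap v]; exact hh v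
  have hq0 : h' q = 0 := by simp [hh']
  obtain ⟨v₀, -, hmax⟩ := Finset.exists_max_image Finset.univ h'
    ⟨q, Finset.mem_univ q⟩
  rcases le_or_gt (h' v₀) 0 with hM | hM
  · -- everyone ≤ 0, Laplacian at q is nonnegative
    have h1 : 0 ≤ G.lap h' q := by
      unfold lap
      apply Finset.sum_nonneg
      intro u _
      have h2 : h' u ≤ 0 := le_trans (hmax u (Finset.mem_univ u)) hM
      have h3 : (0:ℤ) ≤ (G.mul q u : ℤ) := by positivity
      nlinarith [hq0]
    have := hh2 q
    omega
  · -- the argmax set would be legally firable: contradiction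
    exfalso
    set A : Finset V := Finset.univ.filter (fun v => h' v = h' v₀) with hA
    have hv₀A : v₀ ∈ A := by simp [hA]
    have hqA : q ∉ A := by
      simp only [hA, Finset.mem_filter, Finset.mem_univ, true_and]
      omega
    apply hterm A ⟨v₀, hv₀A⟩ hqA
    intro v
    by_cases hv : v ∈ A
    · have hvmax : h' v = h' v₀ := by
        simpa [hA] using hv
      have hbound : ∑ u ∈ Aᶜ, (G.mul v u : ℤ) ≤ G.lap h' v := by
        unfold lap
        have hsplit : ∀ u : V, (if u ∈ Aᶜ then (G.mul v u : ℤ) else 0)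
            ≤ (G.mul v u : ℤ) * (h' v - h' u) := by
          intro u
          by_cases hu : u ∈ A
          · have : h' u = h' v₀ := by simpa [hA] using hu
            simp only [Finset.mem_compl, hu, not_true, if_false]
            have h3 : (0:ℤ) ≤ (G.mul v u : ℤ) := by positivity
            nlinarith [hvmax, this]
          · have hne : h' u ≠ h' v₀ := by
              intro hcon
              exact hu (by simp [hA, hcon])
            have hle : h' u ≤ h' v₀ := hmax u (Finset.mem_univ u)
            have h4 : h' u + 1 ≤ h' v := by omega
            have h3 : (0:ℤ) ≤ (G.mul v u : ℤ) := by positivity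
            simp only [Finset.mem_compl, hu, not_false_iff, if_true]
            nlinarith
        calc ∑ u ∈ Aᶜ, (G.mul v u : ℤ)
            = ∑ u, (if u ∈ Aᶜ then (G.mul v u : ℤ) else 0) := by
              rw [Finset.sum_ite_mem, Finset.univ_inter]
        _ ≤ ∑ u, (G.mul v u : ℤ) * (h' v - h' u) := Finset.sum_le_sum fun u _ => hsplit u
      have hfv : G.fire A D' v = D' v - ∑ u ∈ Aᶜ, (G.mul v u : ℤ) := by
        simp [fire, hv]
      rw [hfv]
      have h5 := hh2 v
      have h6 := hEff'' v
      omega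
    · have hfv : G.fire A D' v = D' v + ∑ u ∈ A, (G.mul v u : ℤ) := by
        simp [fire, hv]
      rw [hfv]
      have h6 := hEff v
      have h7 : (0:ℤ) ≤ ∑ u ∈ A, (G.mul v u : ℤ) :=
        Finset.sum_nonneg fun u _ => by positivity
      omega

/-- Core extraction: along a legal firing sequence from a divisor that is zero on
the egg `X` to one that has a chip on `q ∈ X`, there is an initial segment whose
total firing never touches `X` and ends adjacent to `X`. -/
lemma core_extract (G : Multigraph V) {S : Finset (Finset V)} (hS : IsScramble G S)
    {X : Finset V} (hXS : X ∈ S) {q : V} (hqX : q ∈ X) {D₂ : V → ℤ} (hq₂ : 1 ≤ D₂ q) :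
    ∀ {Dc : V → ℤ}, G.Reach q Dc D₂ → (∀ v ∈ X, Dc v = 0) →
    ∃ g : V → ℕ, Effective (fun v => Dc v - G.lap (fun u => (g u : ℤ)) v) ∧
      (∀ v ∈ X, g v = 0) ∧ (∃ x ∈ X, ∃ w, 0 < G.mul x w ∧ 1 ≤ g w) := by
  classical
  intro Dc hreach
  induction hreach using Relation.ReflTransGen.head_induction_on with
  | refl =>
      intro hchip
      have := hchip q hqX
      omega
  | @head Da Db hstep hrest ih =>
      intro hchip
      obtain ⟨W, hWne, hqW, hfire, hWeff⟩ := hstep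
      have hXW : ∀ v ∈ X, v ∉ W :=
        G.no_fire_of_chipless (hS X hXS) hqX hqW hchip (hfire ▸ hWeff)
      have hcast : (fun u => ((if u ∈ W then 1 else 0 : ℕ) : ℤ))
          = fun u => (if u ∈ W then (1:ℤ) else 0) := by
        funext u; by_cases hu : u ∈ W <;> simp [hu]
      by_cases hgain : ∃ x ∈ X, ∃ w ∈ W, 0 < G.mul x w
      · obtain ⟨x, hx, w, hwW, hmul⟩ := hgain
        refine ⟨fun u => if u ∈ W then 1 else 0, ?_, ?_, ⟨x, hx, w, hmul, by simp [hwW]⟩⟩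
        · intro v
          have heq : Da v - G.lap (fun u => ((if u ∈ W then 1 else 0 : ℕ) : ℤ)) v
              = G.fire W Da v := by
            rw [hcast, G.fire_eq]
          show (0:ℤ) ≤ Da v - G.lap (fun u => ((if u ∈ W then 1 else 0 : ℕ) : ℤ)) v
          rw [heq, ← hfire]
          exact hWeff v
        · intro v hv
          simp [hXW v hv]
      · push_neg at hgain
        have hchip1 : ∀ v ∈ X, (G.fire W Da) v = 0 := by
          intro v hv
          have hvW := hXW v hv
          have hsum : ∑ u ∈ W, (G.mul v u : ℤ) = 0 := by
            apply Finset.sum_eq_zero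
            intro u hu
            have := hgain v hv u hu
            have : G.mul v u = 0 := by omega
            exact_mod_cast this
          simp only [fire, hvW, if_false]
          rw [hsum, hchip v hv]
          ring
        obtain ⟨g, hgEff, hgX, x, hx, w, hmul, hgw⟩ := ih (fun v hv => by
          rw [hfire]; exact hchip1 v hv)
        refine ⟨fun u => g u + (if u ∈ W then 1 else 0), ?_, ?_,
          ⟨x, hx, w, hmul, le_trans hgw (Nat.le_add_right _ _)⟩⟩
        · intro v
          have hcast2 : (fun u => ((g u + if u ∈ W then 1 else 0 : ℕ) : ℤ))
              = fun u => (g u : ℤ) + (if u ∈ W then (1:ℤ) else 0) := by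
            funext u; by_cases hu : u ∈ W <;> simp [hu]
          have heq : Da v - G.lap (fun u => ((g u + if u ∈ W then 1 else 0 : ℕ) : ℤ)) v
              = (G.fire W Da) v - G.lap (fun u => (g u : ℤ)) v := by
            rw [hcast2, G.lap_add, G.fire_eq]
            ring
          show (0:ℤ) ≤ Da v - G.lap (fun u => ((g u + if u ∈ W then 1 else 0 : ℕ) : ℤ)) v
          rw [heq, ← hfire]
          exact hgEff v
        · intro v hv
          simp [hgX v hv, hXW v hv]


lemma card_chip_le (D : V → ℤ) (hD : Effective D) {d : ℕ} (hdeg : ∑ v, D v = (d:ℤ))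
    {C : Finset V} (hC : ∀ v ∈ C, 1 ≤ D v) : C.card ≤ d := by
  have h1 : (C.card : ℤ) ≤ ∑ v ∈ C, D v := by
    have h0 : (C.card : ℤ) = ∑ _v ∈ C, (1:ℤ) := by simp
    rw [h0]
    exact Finset.sum_le_sum hC
  have h2 : ∑ v ∈ C, D v ≤ ∑ v, D v :=
    Finset.sum_le_sum_of_subset_of_nonneg (Finset.subset_univ C) (fun v _ _ => hD v)
  have h3 : (C.card : ℤ) ≤ (d:ℤ) := by rw [← hdeg]; exact h1.trans h2
  exact_mod_cast h3

lemma valid_le_deg (G : Multigraph V) (hG : G.Connected) {S : Finset (Finset V)}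
    (hS : IsScramble G S) {k : ℕ} (hvo : ValidOrder G S k) {D₀ : V → ℤ}
    (hEff : Effective D₀) (hpr : PositiveRank G D₀) {d : ℕ}
    (hdeg : deg D₀ = (d:ℤ)) : k ≤ d := by
  classical
  have hdeg' : ∑ v, D₀ v = (d:ℤ) := hdeg
  by_contra hk
  push_neg at hk
  obtain ⟨hhit, hcut2⟩ := hvo
  have claim1 : ∀ C : Finset V, C.card ≤ d → ∃ E ∈ S, ∀ v ∈ E, v ∉ C := by
    intro C hC
    by_contra hno
    push_neg at hno
    have hHit : IsHitting S C := by
      intro E hE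
      obtain ⟨v, hv, hvC⟩ := hno E hE
      exact ⟨v, Finset.mem_inter.mpr ⟨hv, hvC⟩⟩
    have := hhit C hHit
    omega
  have main : ∀ n : ℕ, ∀ f : V → ℕ, ∀ X : Finset V, X ∈ S →
      Fintype.card V - (Finset.univ.filter fun v => f v ≠ 0).card ≤ n →
      Effective (fun v => D₀ v - G.lap (fun u => (f u : ℤ)) v) →
      (∀ x ∈ X, ∀ u, 0 < G.mul x u → f u = 0) →
      (∀ v ∈ X, f v = 0) →
      (∀ v ∈ X, D₀ v - G.lap (fun u => (f u : ℤ)) v = 0) →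
      False := by
    intro n
    induction n with
    | zero =>
        intro f X hXS hn hEffc hfN hfX hchip
        obtain ⟨x, hx⟩ := (hS X hXS).1
        have hxsupp : x ∉ (Finset.univ.filter fun v => f v ≠ 0) := by
          simp [hfX x hx]
        have hlt : (Finset.univ.filter fun v => f v ≠ 0).card < Fintype.card V := by
          rw [← Finset.card_univ]
          apply Finset.card_lt_card
          rw [Finset.ssubset_iff_of_subset (Finset.subset_univ _)]
          exact ⟨x, Finset.mem_univ x, hxsupp⟩
        omega
    | succ n ih =>
        intro f X hXS hn hEffc hfN hfX hchip
        obtain ⟨q, hqX⟩ := (hS X hXS).1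
        obtain ⟨D₂, hreach, hEffD₂, hterm⟩ :=
          G.exists_terminal hG q (fun v => D₀ v - G.lap (fun u => (f u : ℤ)) v) hEffc
        have hlin0 : LinEq G D₀ (fun v => D₀ v - G.lap (fun u => (f u : ℤ)) v) :=
          G.linEq_script_nat D₀ f
        have hlinD₂ : LinEq G D₀ D₂ := hlin0.trans (reach_linEq hreach)
        have hq₂ : 1 ≤ D₂ q := G.terminal_chip hG hpr hlinD₂ hEffD₂ hterm
        obtain ⟨g, hgEff, hgX, x, hxX, w, hmulxw, hgw⟩ :=
          G.core_extract hS hXS hqX hq₂ hreach hchip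
        set f' : V → ℕ := fun v => f v + g v with hf'def
        set B : Finset V := Finset.univ.filter (fun v => f' v ≠ 0) with hBdef
        set D' : V → ℤ := fun v => D₀ v - G.lap (fun u => (f' u : ℤ)) v with hD'def
        have hcast3 : (fun u => ((f' u : ℕ) : ℤ)) = fun u => (f u : ℤ) + (g u : ℤ) := by
          funext u; rw [hf'def]; push_cast; ring
        have hD'eq : ∀ v, D' v
            = (D₀ v - G.lap (fun u => (f u : ℤ)) v) - G.lap (fun u => (g u : ℤ)) v := by
          intro v
          rw [hD'def]
          show D₀ v - G.lap (fun u => ((f' u : ℕ) : ℤ)) v = _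
          rw [hcast3, G.lap_add]
          ring
        have hEffD' : Effective D' := by
          intro v
          rw [hD'eq v]
          exact hgEff v
        have hXB : ∀ v ∈ X, v ∉ B := by
          intro v hv
          simp [hBdef, hf'def, hfX v hv, hgX v hv]
        have hfw : f w = 0 := hfN x hxX w hmulxw
        have hwB : w ∈ B := by
          have h1 : f' w = f w + g w := rfl
          have hne : f' w ≠ 0 := by omega
          simp [hBdef, hne]
        have hP2 : ∀ u, u ∉ B → D' u = D₀ u + ∑ v, (G.mul u v : ℤ) * (f' v : ℤ) := by
          intro u hu
          have hfu : f' u = 0 := by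
            by_contra hne
            exact hu (by simp [hBdef, hne])
          have hlapu : G.lap (fun v => (f' v : ℤ)) u = - ∑ v, (G.mul u v : ℤ) * (f' v : ℤ) := by
            unfold lap
            rw [← Finset.sum_neg_distrib]
            apply Finset.sum_congr rfl
            intro v _
            show (G.mul u v : ℤ) * ((f' u : ℤ) - (f' v : ℤ)) = -((G.mul u v : ℤ) * (f' v : ℤ))
            rw [hfu]
            push_cast
            try ring
          rw [hD'def]
          show D₀ u - G.lap (fun v => (f' v : ℤ)) u = _
          rw [hlapu]
          ring
        have hNB : ∀ u, u ∉ B → ∀ w', 0 < G.mul u w' → w' ∈ B → 1 ≤ D' u := by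
          intro u hu w' hmul hw'B
          rw [hP2 u hu]
          have h1 : 1 ≤ f' w' := by
            have : f' w' ≠ 0 := by simpa [hBdef] using hw'B
            omega
          have h1' : (1:ℤ) ≤ (f' w' : ℤ) := by exact_mod_cast h1
          have h2' : (1:ℤ) ≤ (G.mul u w' : ℤ) := by exact_mod_cast hmul
          have h3 : (1:ℤ) ≤ (G.mul u w' : ℤ) * (f' w' : ℤ) := by nlinarith
          have h4 : (G.mul u w' : ℤ) * (f' w' : ℤ) ≤ ∑ v, (G.mul u v : ℤ) * (f' v : ℤ) :=
            Finset.single_le_sum (f := fun v => (G.mul u v : ℤ) * (f' v : ℤ))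
              (fun i _ => by positivity) (Finset.mem_univ w')
          have h5 := hEff u
          linarith
        have hdegD' : ∑ u, D' u = (d:ℤ) := by
          have h4 : ∑ u, D' u = ∑ u, D₀ u - ∑ u, G.lap (fun v => (f' v : ℤ)) u := by
            rw [← Finset.sum_sub_distrib]
          rw [h4, G.sum_lap, hdeg']
          ring
        have hcutB : G.cut B ≤ d := by
          have hswap : (G.cut B : ℤ) = ∑ u ∈ Bᶜ, ∑ v ∈ B, (G.mul u v : ℤ) := by
            unfold cut
            push_cast
            rw [Finset.sum_comm]
            apply Finset.sum_congr rfl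
            intro u _
            apply Finset.sum_congr rfl
            intro v _
            rw [G.symm]
          have hle1 : ∀ u ∈ Bᶜ, ∑ v ∈ B, (G.mul u v : ℤ) ≤ D' u - D₀ u := by
            intro u hu
            have hu' : u ∉ B := Finset.mem_compl.mp hu
            have h1 : ∑ v ∈ B, (G.mul u v : ℤ) ≤ ∑ v ∈ B, (G.mul u v : ℤ) * (f' v : ℤ) := by
              apply Finset.sum_le_sum
              intro v hv
              have h2 : 1 ≤ f' v := by
                have : f' v ≠ 0 := by simpa [hBdef] using hv
                omega
              have h2' : (1:ℤ) ≤ (f' v : ℤ) := by exact_mod_cast h2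
              nlinarith [show (0:ℤ) ≤ (G.mul u v : ℤ) by positivity]
            have h2 : ∑ v ∈ B, (G.mul u v : ℤ) * (f' v : ℤ)
                ≤ ∑ v, (G.mul u v : ℤ) * (f' v : ℤ) :=
              Finset.sum_le_sum_of_subset_of_nonneg (Finset.subset_univ B)
                (fun v _ _ => by positivity)
            have h3 := hP2 u hu'
            linarith
          have hsum1 : ∑ u ∈ Bᶜ, (D' u - D₀ u) ≤ ∑ u ∈ Bᶜ, D' u := by
            apply Finset.sum_le_sum
            intro u _
            have := hEff u
            omega
          have hsum2 : ∑ u ∈ Bᶜ, D' u ≤ ∑ u, D' u :=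
            Finset.sum_le_sum_of_subset_of_nonneg (Finset.subset_univ _)
              (fun u _ _ => hEffD' u)
          have hfinal : (G.cut B : ℤ) ≤ (d:ℤ) := by
            rw [hswap]
            calc ∑ u ∈ Bᶜ, ∑ v ∈ B, (G.mul u v : ℤ)
                ≤ ∑ u ∈ Bᶜ, (D' u - D₀ u) := Finset.sum_le_sum hle1
            _ ≤ (d:ℤ) := by linarith
          exact_mod_cast hfinal
        by_cases hin : ∃ Z ∈ S, Z ⊆ B
        · obtain ⟨Z, hZS, hZB⟩ := hin
          have hXBc : X ⊆ Bᶜ := fun v hv => Finset.mem_compl.mpr (hXB v hv)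
          have := hcut2 B ⟨Z, hZS, hZB⟩ ⟨X, hXS, hXBc⟩
          omega
        · set C : Finset V := Finset.univ.filter (fun v => v ∉ B ∧ 1 ≤ D' v) with hCdef
          have hCcard : C.card ≤ d := by
            apply card_chip_le D' hEffD' hdegD'
            intro v hv
            exact ((Finset.mem_filter.mp hv).2).2
          obtain ⟨Y, hYS, hYC⟩ := claim1 C hCcard
          have hYB : ∀ v ∈ Y, v ∉ B := by
            intro v hv
            by_contra hvB
            have hYnB : ¬ Y ⊆ B := fun hsub => hin ⟨Y, hYS, hsub⟩
            obtain ⟨y', hy', hy'B⟩ := Finset.not_subset.mp hYnB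
            obtain ⟨-, hconnY⟩ := hS Y hYS
            obtain ⟨p⟩ := hconnY.preconnected ⟨v, Finset.mem_coe.mpr hv⟩
              ⟨y', Finset.mem_coe.mpr hy'⟩
            obtain ⟨a, b, hadj, haB, hbB⟩ :=
              crossing_edge (P := fun z : (Y : Set V) => (z : V) ∈ B) p
                (by simpa using hy'B) (by simpa using hvB)
            have hadj' : G.simple.Adj (a : V) (b : V) := hadj
            have hmulab : 0 < G.mul (b : V) (a : V) := by
              have h0 : 0 < G.mul (a : V) (b : V) := hadj'
              rwa [G.symm] at h0
            have h1 : 1 ≤ D' (b : V) := hNB (b : V) hbB (a : V) hmulab haB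
            have hbY : (b : V) ∈ Y := Finset.mem_coe.mp b.2
            have hbC : (b : V) ∈ C := by
              simp only [hCdef, Finset.mem_filter, Finset.mem_univ, true_and]
              exact ⟨hbB, h1⟩
            exact hYC (b : V) hbY hbC
          have hYchip : ∀ v ∈ Y, D' v = 0 := by
            intro v hv
            have h1 := hYC v hv
            have h2 := hYB v hv
            have h3 : ¬ (1 ≤ D' v) := by
              intro hge
              apply h1
              simp only [hCdef, Finset.mem_filter, Finset.mem_univ, true_and]
              exact ⟨h2, hge⟩
            have h4 := hEffD' v
            omega
          have hfN' : ∀ y ∈ Y, ∀ u, 0 < G.mul y u → f' u = 0 := by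
            intro y hy u hmul
            by_contra hne
            have huB : u ∈ B := by simp [hBdef, hne]
            have h1 : 1 ≤ D' y := hNB y (hYB y hy) u hmul huB
            have h2 := hYchip y hy
            omega
          have hfY : ∀ v ∈ Y, f' v = 0 := by
            intro v hv
            by_contra hne
            exact hYB v hv (by simp [hBdef, hne])
          have hsub : (Finset.univ.filter fun v => f v ≠ 0) ⊆ B := by
            intro v hv
            simp only [Finset.mem_filter, Finset.mem_univ, true_and] at hv
            have h1 : f' v = f v + g v := rfl
            have h2 : f' v ≠ 0 := by omega
            simp [hBdef, h2]
          have hwold : w ∉ (Finset.univ.filter fun v => f v ≠ 0) := by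
            simp [hfw]
          have hss : (Finset.univ.filter fun v => f v ≠ 0) ⊂ B := by
            rw [Finset.ssubset_iff_of_subset hsub]
            exact ⟨w, hwB, hwold⟩
          have hcards : (Finset.univ.filter fun v => f v ≠ 0).card < B.card :=
            Finset.card_lt_card hss
          have hbound : B.card ≤ Fintype.card V := by
            rw [← Finset.card_univ]
            exact Finset.card_le_card (Finset.subset_univ B)
          have hBcard : B.card = (Finset.univ.filter fun v => f' v ≠ 0).card := by
            rw [hBdef]
          exact ih f' Y hYS (by omega) hEffD' hfN' hfY hYchip
  -- kick off the induction with the zero firing function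
  have hC₀card : (Finset.univ.filter fun v => 1 ≤ D₀ v).card ≤ d := by
    apply card_chip_le D₀ hEff hdeg'
    intro v hv
    exact (Finset.mem_filter.mp hv).2
  obtain ⟨X₀, hX₀S, hX₀⟩ := claim1 _ hC₀card
  have hlz : ∀ v, G.lap (fun u => ((0:ℕ) : ℤ)) v = 0 := by
    intro v
    have h1 : (fun u : V => ((0:ℕ) : ℤ)) = fun _ => (0:ℤ) := by funext u; simp
    rw [h1]
    exact G.lap_zero v
  have hchip0 : ∀ v ∈ X₀, D₀ v - G.lap (fun u => ((0:ℕ) : ℤ)) v = 0 := by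
    intro v hv
    have h1 := hX₀ v hv
    have h2 : ¬ (1 ≤ D₀ v) := by
      intro hge
      exact h1 (by simp [hge])
    have h3 := hEff v
    rw [hlz v]
    omega
  refine main (Fintype.card V) (fun _ => 0) X₀ hX₀S (Nat.sub_le _ _) ?_
    (fun _ _ _ _ => rfl) (fun _ _ => rfl) ?_
  · intro v
    show (0:ℤ) ≤ D₀ v - G.lap (fun u => ((0:ℕ) : ℤ)) v
    rw [hlz v]
    have := hEff v
    omega
  · intro v hv
    show D₀ v - G.lap (fun u => ((0:ℕ) : ℤ)) v = 0
    exact hchip0 v hv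

end Multigraph

open Multigraph in




/-- The scramble number of a connected multigraph is at most its gonality. -/
theorem scrambleNumber_le_gonality {V : Type} [Fintype V] [DecidableEq V]
    (G : Multigraph V) (hG : G.Connected) :
    scrambleNumber G ≤ gonality G := by
  classical
  have hmem : (Fintype.card V) ∈
      {n : ℕ | ∃ D : V → ℤ, Effective D ∧ PositiveRank G D ∧ deg D = (n : ℤ)} := by
    refine ⟨fun _ => 1, fun v => by norm_num,
      fun v => ⟨fun _ => 1, Relation.ReflTransGen.refl, fun u => by norm_num, le_refl 1⟩, ?_⟩
    simp [Multigraph.deg]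
  obtain ⟨D₀, hEff, hpr, hdeg⟩ := Nat.sInf_mem (⟨Fintype.card V, hmem⟩ : Set.Nonempty _)
  show sSup {n | ∃ S, IsScramble G S ∧ scrambleOrder G S = n} ≤ gonality G
  refine csSup_le ⟨scrambleOrder G (∅ : Finset (Finset V)), ?_⟩ ?_
  · exact ⟨∅, fun E hE => absurd hE (Finset.notMem_empty E), rfl⟩
  intro n hn
  obtain ⟨S, hS, rfl⟩ := hn
  show sSup {k | ValidOrder G S k} ≤ gonality G
  refine csSup_le ⟨0, ?_⟩ ?_
  · exact ⟨fun C _ => Nat.zero_le _, fun A _ _ => Nat.zero_le _⟩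
  intro k hk
  exact valid_le_deg G hG hS hk hEff hpr hdeg
end

section
/- If G' is a subgraph of a connected multigraph G (with both connected), then sn(G') ≤ sn(G). -/
namespace Multigraph

/-- `G'` is a subgraph of `G`: it can be obtained from `G` by deleting edges and
(isolated) vertices; equivalently, the vertices of `G'` inject into those of `G`
with edge multiplicities not exceeding those of `G`. -/
def IsSubgraph {V' V : Type} (G' : Multigraph V') (G : Multigraph V) : Prop :=
  ∃ f : V' → V, Function.Injective f ∧ ∀ a b, G'.mul a b ≤ G.mul (f a) (f b)

end Multigraph

namespace Multigraph

variable {V' V : Type} [Fintype V'] [DecidableEq V'] [Fintype V] [DecidableEq V]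

lemma validOrder_zero (G : Multigraph V) (S : Finset (Finset V)) : ValidOrder G S 0 :=
  ⟨fun _ _ => Nat.zero_le _, fun _ _ _ => Nat.zero_le _⟩

lemma validOrder_le_card {G : Multigraph V} {S : Finset (Finset V)} (hS : IsScramble G S)
    {k : ℕ} (hk : ValidOrder G S k) : k ≤ Fintype.card V := by
  have h : IsHitting S Finset.univ := by
    intro E hE
    obtain ⟨x, hx⟩ := (hS E hE).1
    exact ⟨x, Finset.mem_inter.2 ⟨hx, Finset.mem_univ x⟩⟩
  simpa [Finset.card_univ] using hk.1 _ h

lemma scrambleOrder_le_card {G : Multigraph V} {S : Finset (Finset V)} (hS : IsScramble G S) :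
    scrambleOrder G S ≤ Fintype.card V :=
  csSup_le ⟨0, validOrder_zero G S⟩ (fun _ hk => validOrder_le_card hS hk)

lemma scrambleOrder_empty (G : Multigraph V) : scrambleOrder G (∅ : Finset (Finset V)) = 0 := by
  have h : {k | ValidOrder G (∅ : Finset (Finset V)) k} = {0} := by
    ext k
    simp only [Set.mem_setOf_eq, Set.mem_singleton_iff]
    constructor
    · intro hk
      simpa using hk.1 ∅ (fun E hE => absurd hE (Finset.notMem_empty E))
    · rintro rfl
      exact validOrder_zero G ∅
  rw [scrambleOrder, h, csSup_singleton]

lemma connSubset_image {G' : Multigraph V'} {G : Multigraph V} {f : V' → V}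
    (hf : Function.Injective f) (hmul : ∀ a b, G'.mul a b ≤ G.mul (f a) (f b))
    {E : Finset V'} (hE : G'.ConnSubset E) : G.ConnSubset (E.image f) := by
  refine ⟨hE.1.image f, ?_⟩
  let F : (SimpleGraph.induce (E : Set V') G'.simple) →g
      (SimpleGraph.induce ((E.image f : Finset V) : Set V) G.simple) :=
    { toFun := fun x => ⟨f x.1, by
        simpa using Finset.mem_image_of_mem f (by simpa using x.2)⟩
      map_rel' := fun {x y} h => by
        simp only [SimpleGraph.comap_adj, Function.Embedding.coe_subtype] at h ⊢
        exact lt_of_lt_of_le (show 0 < G'.mul x.1 y.1 from h) (hmul _ _) }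
  refine SimpleGraph.Connected.map F ?_ hE.2
  rintro ⟨v, hv⟩
  simp only [Finset.coe_image, Set.mem_image, Finset.mem_coe] at hv
  obtain ⟨a, ha, rfl⟩ := hv
  exact ⟨⟨a, ha⟩, rfl⟩

lemma validOrder_image {G' : Multigraph V'} {G : Multigraph V} {f : V' → V}
    (hf : Function.Injective f) (hmul : ∀ a b, G'.mul a b ≤ G.mul (f a) (f b))
    (S : Finset (Finset V')) {k : ℕ} (hk : ValidOrder G' S k) :
    ValidOrder G (S.image (Finset.image f)) k := by
  constructor
  · intro C hC
    have h1 : IsHitting S (Finset.univ.filter (fun a => f a ∈ C)) := by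
      intro E hE
      obtain ⟨x, hx⟩ := hC (E.image f) (Finset.mem_image_of_mem _ hE)
      rw [Finset.mem_inter] at hx
      obtain ⟨a, ha, rfl⟩ := Finset.mem_image.1 hx.1
      exact ⟨a, Finset.mem_inter.2 ⟨ha, Finset.mem_filter.2 ⟨Finset.mem_univ a, hx.2⟩⟩⟩
    refine (hk.1 _ h1).trans (Finset.card_le_card_of_injOn f ?_ hf.injOn)
    intro a ha
    exact (Finset.mem_filter.1 ha).2
  · intro A hA hA'
    obtain ⟨E₁, hE₁, hsub1⟩ := hA
    obtain ⟨E, hE, rfl⟩ := Finset.mem_image.1 hE₁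
    obtain ⟨E₁', hE₁', hsub1'⟩ := hA'
    obtain ⟨E', hE', rfl⟩ := Finset.mem_image.1 hE₁'
    set A' : Finset V' := Finset.univ.filter (fun a => f a ∈ A) with hA'def
    have hmemA' : ∀ a : V', a ∈ A' ↔ f a ∈ A := by
      intro a
      simp [hA'def]
    have h1 : k ≤ G'.cut A' := by
      refine hk.2 A' ⟨E, hE, fun a ha => (hmemA' a).2 (hsub1 (Finset.mem_image_of_mem f ha))⟩
        ⟨E', hE', fun a ha => ?_⟩
      have h2 := hsub1' (Finset.mem_image_of_mem f ha)
      rw [Finset.mem_compl] at h2 ⊢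
      exact fun hc => h2 ((hmemA' a).1 hc)
    refine h1.trans ?_
    have hinj : ∀ (s : Finset V'), ∀ a ∈ s, ∀ b ∈ s, f a = f b → a = b :=
      fun _ a _ b _ h => hf h
    calc G'.cut A' = ∑ a ∈ A', ∑ b ∈ A'ᶜ, G'.mul a b := rfl
      _ ≤ ∑ a ∈ A', ∑ b ∈ A'ᶜ, G.mul (f a) (f b) :=
          Finset.sum_le_sum (fun a _ => Finset.sum_le_sum (fun b _ => hmul a b))
      _ = ∑ u ∈ A'.image f, ∑ v ∈ A'ᶜ.image f, G.mul u v := by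
          rw [Finset.sum_image (hinj A')]
          exact Finset.sum_congr rfl (fun a _ => (Finset.sum_image (hinj A'ᶜ)).symm)
      _ ≤ ∑ u ∈ A'.image f, ∑ v ∈ Aᶜ, G.mul u v := by
          refine Finset.sum_le_sum (fun u _ => Finset.sum_le_sum_of_subset ?_)
          intro v hv
          obtain ⟨b, hb, rfl⟩ := Finset.mem_image.1 hv
          rw [Finset.mem_compl] at hb ⊢
          exact fun hc => hb ((hmemA' b).2 hc)
      _ ≤ ∑ u ∈ A, ∑ v ∈ Aᶜ, G.mul u v := by
          refine Finset.sum_le_sum_of_subset ?_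
          intro u hu
          obtain ⟨a, ha, rfl⟩ := Finset.mem_image.1 hu
          exact (hmemA' a).1 ha
      _ = G.cut A := rfl

end Multigraph

open Multigraph in
/-- The scramble number is subgraph monotone. -/
theorem scrambleNumber_le_of_subgraph {V' V : Type}
    [Fintype V'] [DecidableEq V'] [Fintype V] [DecidableEq V]
    (G' : Multigraph V') (G : Multigraph V)
    (hG' : G'.Connected) (hG : G.Connected) (hsub : IsSubgraph G' G) :
    scrambleNumber G' ≤ scrambleNumber G := by
  obtain ⟨f, hf, hmul⟩ := hsub
  have hBdd : BddAbove {n | ∃ S, IsScramble G S ∧ scrambleOrder G S = n} := by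
    refine ⟨Fintype.card V, ?_⟩
    rintro n ⟨S, hS, rfl⟩
    exact scrambleOrder_le_card hS
  have hne : (0 : ℕ) ∈ {n | ∃ S, IsScramble G' S ∧ scrambleOrder G' S = n} :=
    ⟨∅, fun E hE => absurd hE (Finset.notMem_empty E), scrambleOrder_empty G'⟩
  refine csSup_le ⟨0, hne⟩ ?_
  rintro n ⟨S, hS, rfl⟩
  have hscr : IsScramble G (S.image (Finset.image f)) := by
    intro E hE
    obtain ⟨E', hE', rfl⟩ := Finset.mem_image.1 hE
    exact connSubset_image hf hmul (hS E' hE')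
  have h1 : scrambleOrder G' S ≤ scrambleOrder G (S.image (Finset.image f)) := by
    refine csSup_le ⟨0, validOrder_zero G' S⟩ (fun k hk => ?_)
    exact le_csSup ⟨Fintype.card V, fun m hm => validOrder_le_card hscr hm⟩
      (validOrder_image hf hmul S hk)
  exact h1.trans (le_csSup hBdd ⟨_, hscr, rfl⟩)
end

section
/- If S' is a scramble in a subgraph G' of G, and S is the scramble in G with the same eggs, then the scramble order of S in G is at least the scramble order of S' in G'. -/
open Multigraph in
/-- If `S'` is a scramble in a subgraph `G'` of `G` (the subgraph realized by the
injection `f`), then the scramble in `G` with the same eggs has scramble order at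
least that of `S'` in `G'`. -/
theorem scrambleOrder_le_of_subgraph {V' V : Type}
    [Fintype V'] [DecidableEq V'] [Fintype V] [DecidableEq V]
    (G' : Multigraph V') (G : Multigraph V) (hG : G.Connected)
    (f : V' → V) (hf : Function.Injective f)
    (hle : ∀ a b, G'.mul a b ≤ G.mul (f a) (f b))
    (S' : Finset (Finset V')) (hS' : IsScramble G' S') :
    scrambleOrder G' S' ≤ scrambleOrder G (S'.image (Finset.image f)) := by
  apply csSup_le_csSup
  · refine ⟨Fintype.card V, fun k hk => ?_⟩
    have huniv : Multigraph.IsHitting (S'.image (Finset.image f)) Finset.univ := by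
      intro E hE
      obtain ⟨E₀, hE₀, rfl⟩ := Finset.mem_image.mp hE
      simpa using ((hS' E₀ hE₀).1.image f)
    simpa using hk.1 Finset.univ huniv
  · exact ⟨0, fun _ _ => Nat.zero_le _, fun _ _ _ => Nat.zero_le _⟩
  · rintro k ⟨h1, h2⟩
    constructor
    · intro C hC
      set C' := Finset.univ.filter (fun v' => f v' ∈ C) with hC'def
      have hhit : Multigraph.IsHitting S' C' := by
        intro E hE
        obtain ⟨x, hx⟩ := hC (E.image f) (Finset.mem_image_of_mem _ hE)
        rw [Finset.mem_inter] at hx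
        obtain ⟨e, he, rfl⟩ := Finset.mem_image.mp hx.1
        exact ⟨e, Finset.mem_inter.mpr ⟨he,
          Finset.mem_filter.mpr ⟨Finset.mem_univ _, hx.2⟩⟩⟩
      calc k ≤ C'.card := h1 C' hhit
        _ ≤ C.card := Finset.card_le_card_of_injOn f
            (fun v hv => (Finset.mem_filter.mp hv).2) hf.injOn
    · rintro A ⟨E, hE, hEA⟩ ⟨E', hE', hE'c⟩
      obtain ⟨E₀, hE₀, rfl⟩ := Finset.mem_image.mp hE
      obtain ⟨E₀', hE₀', rfl⟩ := Finset.mem_image.mp hE'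
      set A' := Finset.univ.filter (fun v => f v ∈ A) with hA'def
      have hsub1 : E₀ ⊆ A' := fun e he =>
        Finset.mem_filter.mpr ⟨Finset.mem_univ _, hEA (Finset.mem_image_of_mem _ he)⟩
      have hsub2 : E₀' ⊆ A'ᶜ := by
        intro e he
        have hfe : f e ∈ Aᶜ := hE'c (Finset.mem_image_of_mem _ he)
        rw [Finset.mem_compl] at hfe ⊢
        simp [hA'def, hfe]
      have hcut : G'.cut A' ≤ G.cut A := by
        unfold Multigraph.cut
        calc ∑ u ∈ A', ∑ v ∈ A'ᶜ, G'.mul u v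
            ≤ ∑ u ∈ A', ∑ v ∈ A'ᶜ, G.mul (f u) (f v) :=
              Finset.sum_le_sum (fun u _ => Finset.sum_le_sum (fun v _ => hle u v))
          _ = ∑ u ∈ A', ∑ y ∈ A'ᶜ.image f, G.mul (f u) y := by
              refine Finset.sum_congr rfl (fun u _ => ?_)
              rw [Finset.sum_image (fun a _ b _ h => hf h)]
          _ ≤ ∑ u ∈ A', ∑ y ∈ Aᶜ, G.mul (f u) y := by
              refine Finset.sum_le_sum (fun u _ => Finset.sum_le_sum_of_subset ?_)
              intro y hy
              obtain ⟨v, hv, rfl⟩ := Finset.mem_image.mp hy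
              rw [Finset.mem_compl] at hv ⊢
              simp [hA'def] at hv
              exact hv
          _ = ∑ x ∈ A'.image f, ∑ y ∈ Aᶜ, G.mul x y := by
              rw [Finset.sum_image (fun a _ b _ h => hf h)]
          _ ≤ ∑ x ∈ A, ∑ y ∈ Aᶜ, G.mul x y := by
              refine Finset.sum_le_sum_of_subset ?_
              intro x hx
              obtain ⟨v, hv, rfl⟩ := Finset.mem_image.mp hx
              exact (Finset.mem_filter.mp hv).2
      exact le_trans (h2 A' ⟨E₀, hE₀, hsub1⟩ ⟨E₀', hE₀', hsub2⟩) hcut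
end

section
/- Let G be obtained from G' by subdividing one edge, introducing a new vertex u between v and w. If S is a scramble in G, and S' is obtained by replacing each egg E of S by E ∪ {u} when v ∈ E and by E otherwise, then the scramble order of S' in G' is at least the scramble order of S in G. -/
namespace Multigraph

/-- The edge-subdivision of `G` at one edge between `v` and `w`: a new vertex
`none` is introduced in the middle of one of the edges between `v` and `w`. -/
def subdivideEdge {V : Type} [DecidableEq V] (G : Multigraph V) (v w : V) :
    Multigraph (Option V) where
  mul a b :=
    match a, b with
    | some a, some b => G.mul a b - (if s(a, b) = s(v, w) then 1 else 0)
    | none, some a => if a = v ∨ a = w then 1 else 0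
    | some a, none => if a = v ∨ a = w then 1 else 0
    | none, none => 0
  symm := by
    rintro (_ | a) (_ | b)
    · rfl
    · rfl
    · rfl
    · show G.mul a b - _ = G.mul b a - _
      rw [G.symm a b, Sym2.eq_swap]
  loopless := by
    rintro (_ | a)
    · rfl
    · show G.mul a a - _ = 0
      simp [G.loopless]

end Multigraph

/-- A multigraph bundled with its (finite, decidable) vertex type. -/
structure MG where
  V : Type
  [fin : Fintype V]
  [dec : DecidableEq V]
  G : Multigraph V

namespace MG

/-- The scramble number of a bundled multigraph. -/
noncomputable def sn (H : MG) : ℕ :=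
  @Multigraph.scrambleNumber H.V H.fin H.dec H.G

/-- `H'` is obtained from `H` by a single edge-subdivision. -/
def EdgeSubdiv (H H' : MG) : Prop :=
  letI := H.dec
  ∃ v w : H.V, H.G.Adj v w ∧
    ∃ e : H'.V ≃ Option H.V,
      ∀ a b : H'.V, H'.G.mul a b = (Multigraph.subdivideEdge H.G v w).mul (e a) (e b)

/-- `H'` is a subdivision of `H`: obtained by finitely many edge-subdivisions. -/
def IsSubdivision : MG → MG → Prop := Relation.ReflTransGen EdgeSubdiv

end MG
open Finset in
lemma aux_cut {V : Type} [Fintype V] [DecidableEq V]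
    (G : Multigraph V) (v w : V) (hvw : v ≠ w) (A' : Finset (Option V)) :
    G.cut (univ.filter (fun a => some a ∈ A')) ≤ (G.subdivideEdge v w).cut A' := by
  classical
  set A : Finset V := univ.filter (fun a => some a ∈ A') with hA
  have hmemA : ∀ a : V, a ∈ A ↔ some a ∈ A' := by intro a; simp [hA]
  have hdelta : ∀ a b : V, ((if s(a,b) = s(v,w) then 1 else 0) : ℕ)
      = (if a = v ∧ b = w then 1 else 0) + (if a = w ∧ b = v then 1 else 0) := by
    intro a b
    by_cases h1 : a = v ∧ b = w
    · obtain ⟨rfl, rfl⟩ := h1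
      simp [Sym2.eq_iff, hvw, Ne.symm hvw]
    · by_cases h2 : a = w ∧ b = v
      · obtain ⟨rfl, rfl⟩ := h2
        simp [Sym2.eq_iff, hvw, Ne.symm hvw]
      · have h3 : ¬ s(a,b) = s(v,w) := by rw [Sym2.eq_iff]; tauto
        simp [h3, h1, h2]
  have hsplit : ∀ (p q : V) (s t : Finset V),
      (∑ a ∈ s, ∑ b ∈ t, ((if a = p ∧ b = q then 1 else 0):ℕ))
        = if p ∈ s ∧ q ∈ t then 1 else 0 := by
    intro p q s t
    have inner : ∀ a : V, (∑ b ∈ t, ((if a = p ∧ b = q then 1 else 0):ℕ))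
        = if a = p then (if q ∈ t then 1 else 0) else 0 := by
      intro a
      by_cases ha : a = p
      · subst ha
        simp only [true_and, if_true]
        exact Finset.sum_ite_eq' t q (fun _ => 1)
      · simp [ha]
    rw [Finset.sum_congr rfl (fun a _ => inner a), Finset.sum_ite_eq' s p]
    by_cases hp : p ∈ s <;> by_cases hq : q ∈ t <;> simp [hp, hq]
  have hD : ∑ a ∈ A, ∑ b ∈ Aᶜ, ((if s(a,b) = s(v,w) then 1 else 0) : ℕ)
      = (if v ∈ A ∧ w ∈ Aᶜ then 1 else 0) + (if w ∈ A ∧ v ∈ Aᶜ then 1 else 0) := by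
    simp only [hdelta, Finset.sum_add_distrib, hsplit]
  have hor : ∀ b : V, ((if b = v ∨ b = w then 1 else 0) : ℕ)
      = (if b = v then 1 else 0) + (if b = w then 1 else 0) := by
    intro b
    by_cases h1 : b = v
    · subst h1; simp [hvw]
    · simp [h1]
  have hmain : G.cut A ≤ (∑ a ∈ A, ∑ b ∈ Aᶜ, ((G.subdivideEdge v w).mul (some a) (some b)))
      + ∑ a ∈ A, ∑ b ∈ Aᶜ, ((if s(a,b) = s(v,w) then 1 else 0) : ℕ) := by
    rw [Multigraph.cut, ← Finset.sum_add_distrib]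
    apply Finset.sum_le_sum
    intro a _
    rw [← Finset.sum_add_distrib]
    apply Finset.sum_le_sum
    intro b _
    show G.mul a b ≤ (G.mul a b - (if s(a,b) = s(v,w) then 1 else 0)) + _
    omega
  by_cases hn : none ∈ A'
  · have h1 : A' = insert none (A.image some) := by
      ext x; rcases x with _ | a <;> simp [hmemA, hn]
    have h2 : A'ᶜ = Aᶜ.image some := by
      ext x; rcases x with _ | a <;> simp [hmemA, hn]
    have hcut : (G.subdivideEdge v w).cut A'
        = (∑ b ∈ Aᶜ, ((G.subdivideEdge v w).mul none (some b)))
          + ∑ a ∈ A, ∑ b ∈ Aᶜ, ((G.subdivideEdge v w).mul (some a) (some b)) := by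
      rw [Multigraph.cut, h2, h1, Finset.sum_insert (by simp),
        Finset.sum_image (fun a _ b _ h => Option.some.inj h)]
      simp only [Finset.sum_image (fun a _ b _ h => Option.some.inj h)]
    have hN : (∑ b ∈ Aᶜ, ((G.subdivideEdge v w).mul none (some b)))
        = (if v ∈ Aᶜ then 1 else 0) + (if w ∈ Aᶜ then 1 else 0) := by
      show (∑ b ∈ Aᶜ, ((if b = v ∨ b = w then 1 else 0) : ℕ)) = _
      simp only [hor, Finset.sum_add_distrib, Finset.sum_ite_eq' Aᶜ v (fun _ => (1:ℕ)),
        Finset.sum_ite_eq' Aᶜ w (fun _ => (1:ℕ))]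
    have e1 : ((if v ∈ A ∧ w ∈ Aᶜ then 1 else 0) : ℕ) ≤ if w ∈ Aᶜ then 1 else 0 := by
      by_cases q : w ∈ Aᶜ <;> simp [q] <;> split_ifs <;> omega
    have e2 : ((if w ∈ A ∧ v ∈ Aᶜ then 1 else 0) : ℕ) ≤ if v ∈ Aᶜ then 1 else 0 := by
      by_cases q : v ∈ Aᶜ <;> simp [q] <;> split_ifs <;> omega
    have hDN : ∑ a ∈ A, ∑ b ∈ Aᶜ, ((if s(a,b) = s(v,w) then 1 else 0) : ℕ)
        ≤ ∑ b ∈ Aᶜ, ((G.subdivideEdge v w).mul none (some b)) := by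
      rw [hD, hN]; omega
    refine le_trans hmain ?_
    rw [hcut]
    omega
  · have h1 : A' = A.image some := by
      ext x; rcases x with _ | a <;> simp [hmemA, hn]
    have h2 : A'ᶜ = insert none (Aᶜ.image some) := by
      ext x; rcases x with _ | a <;> simp [hmemA, hn]
    have hcut : (G.subdivideEdge v w).cut A'
        = (∑ a ∈ A, ((G.subdivideEdge v w).mul (some a) none))
          + ∑ a ∈ A, ∑ b ∈ Aᶜ, ((G.subdivideEdge v w).mul (some a) (some b)) := by
      rw [Multigraph.cut, h2, h1, Finset.sum_image (fun a _ b _ h => Option.some.inj h),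
        ← Finset.sum_add_distrib]
      apply Finset.sum_congr rfl
      intro a _
      rw [Finset.sum_insert (by simp), Finset.sum_image (fun a _ b _ h => Option.some.inj h)]
    have hN : (∑ a ∈ A, ((G.subdivideEdge v w).mul (some a) none))
        = (if v ∈ A then 1 else 0) + (if w ∈ A then 1 else 0) := by
      show (∑ a ∈ A, ((if a = v ∨ a = w then 1 else 0) : ℕ)) = _
      simp only [hor, Finset.sum_add_distrib, Finset.sum_ite_eq' A v (fun _ => (1:ℕ)),
        Finset.sum_ite_eq' A w (fun _ => (1:ℕ))]
    have e1 : ((if v ∈ A ∧ w ∈ Aᶜ then 1 else 0) : ℕ) ≤ if v ∈ A then 1 else 0 := by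
      by_cases q : v ∈ A <;> simp [q] <;> split_ifs <;> omega
    have e2 : ((if w ∈ A ∧ v ∈ Aᶜ then 1 else 0) : ℕ) ≤ if w ∈ A then 1 else 0 := by
      by_cases q : w ∈ A <;> simp [q] <;> split_ifs <;> omega
    have hDN : ∑ a ∈ A, ∑ b ∈ Aᶜ, ((if s(a,b) = s(v,w) then 1 else 0) : ℕ)
        ≤ ∑ a ∈ A, ((G.subdivideEdge v w).mul (some a) none) := by
      rw [hD, hN]; omega
    refine le_trans hmain ?_
    rw [hcut]
    omega


open Multigraph in
/-- Let `G'` be obtained from `G` by subdividing one edge between `v` and `w`,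
introducing a new vertex `u` (here `none`).  If `S` is a scramble in `G` and `S'`
is obtained by replacing each egg `E` by `E ∪ {u}` when `v ∈ E` and by `E`
otherwise, then the scramble order of `S'` in `G'` is at least that of `S` in `G`. -/
theorem scrambleOrder_le_subdivide {V : Type} [Fintype V] [DecidableEq V]
    (G : Multigraph V) (hG : G.Connected) (v w : V) (hvw : G.Adj v w)
    (S : Finset (Finset V)) (hS : IsScramble G S) :
    scrambleOrder G S ≤
      scrambleOrder (subdivideEdge G v w)
        (S.image fun E =>
          if v ∈ E then insert (none : Option V) (E.image some) else E.image some) := by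
  classical
  have hvw' : v ≠ w := by
    intro h
    subst h
    simpa [Multigraph.Adj, G.loopless] using hvw
  refine csSup_le_csSup ?_ ?_ ?_
  · refine ⟨Fintype.card (Option V), ?_⟩
    intro k hk
    have hhit : IsHitting (S.image fun E =>
        if v ∈ E then insert (none : Option V) (E.image some) else E.image some)
        Finset.univ := by
      intro E hE
      obtain ⟨E₀, hE₀, rfl⟩ := Finset.mem_image.mp hE
      rw [Finset.inter_univ]
      split_ifs
      · exact Finset.insert_nonempty _ _
      · exact ((hS E₀ hE₀).1).image some
    have := hk.1 Finset.univ hhit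
    simpa using this
  · exact ⟨0, fun C _ => Nat.zero_le _, fun A _ _ => Nat.zero_le _⟩
  · rintro k ⟨hk1, hk2⟩
    constructor
    · intro C' hC'
      have hC : IsHitting S (C'.image (fun x => x.getD v)) := by
        intro E hE
        have hfE := Finset.mem_image_of_mem
          (fun E => if v ∈ E then insert (none : Option V) (E.image some) else E.image some) hE
        obtain ⟨x, hx⟩ := hC' _ hfE
        rw [Finset.mem_inter] at hx
        obtain ⟨hx1, hx2⟩ := hx
        refine ⟨x.getD v, Finset.mem_inter.mpr ⟨?_, Finset.mem_image_of_mem _ hx2⟩⟩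
        by_cases hv : v ∈ E
        · rw [if_pos hv, Finset.mem_insert] at hx1
          rcases hx1 with rfl | hx1
          · simpa using hv
          · obtain ⟨a, ha, rfl⟩ := Finset.mem_image.mp hx1
            simpa using ha
        · rw [if_neg hv] at hx1
          obtain ⟨a, ha, rfl⟩ := Finset.mem_image.mp hx1
          simpa using ha
      exact le_trans (hk1 _ hC) Finset.card_image_le
    · rintro A' ⟨E1', hE1', hsub1⟩ ⟨E2', hE2', hsub2⟩
      obtain ⟨E1, hE1, rfl⟩ := Finset.mem_image.mp hE1'
      obtain ⟨E2, hE2, rfl⟩ := Finset.mem_image.mp hE2'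
      set A : Finset V := Finset.univ.filter (fun a => some a ∈ A') with hA
      have hs1 : E1 ⊆ A := by
        intro a ha
        simp only [hA, Finset.mem_filter, Finset.mem_univ, true_and]
        apply hsub1
        split_ifs
        · exact Finset.mem_insert_of_mem (Finset.mem_image_of_mem some ha)
        · exact Finset.mem_image_of_mem some ha
      have hs2 : E2 ⊆ Aᶜ := by
        intro a ha
        simp only [Finset.mem_compl, hA, Finset.mem_filter, Finset.mem_univ, true_and]
        intro hmem
        have h2 : some a ∈ A'ᶜ := by
          apply hsub2
          split_ifs
          · exact Finset.mem_insert_of_mem (Finset.mem_image_of_mem some ha)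
          · exact Finset.mem_image_of_mem some ha
        exact (Finset.mem_compl.mp h2) hmem
      exact le_trans (hk2 A ⟨E1, hE1, hs1⟩ ⟨E2, hE2, hs2⟩) (aux_cut G v w hvw' A')
end

section
/- For k ≥ 2, let G_k be the multigraph obtained from the path on k vertices by replacing each edge with k parallel edges. Then sn(G_k) = k while tw(G_k) = 1. In particular, the scramble number is unbounded in terms of the treewidth. -/
/-- A tree decomposition of a simple graph. -/
structure TreeDecomp {V : Type} (H : SimpleGraph V) where
  ι : Type
  [fin : Fintype ι]
  tree : SimpleGraph ι
  isTree : tree.IsTree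
  bag : ι → Finset V
  cover : ∀ v : V, ∃ i, v ∈ bag i
  coverEdge : ∀ u v : V, H.Adj u v → ∃ i, u ∈ bag i ∧ v ∈ bag i
  coherent : ∀ v : V, (SimpleGraph.induce {i | v ∈ bag i} tree).Connected

/-- The width of a tree decomposition: maximum bag size minus one. -/
def TreeDecomp.width {V : Type} {H : SimpleGraph V} (d : TreeDecomp H) : ℕ :=
  (@Finset.univ d.ι d.fin).sup (fun i => (d.bag i).card) - 1

/-- The treewidth of a simple graph: the minimum width of a tree decomposition. -/
noncomputable def treewidth {V : Type} (H : SimpleGraph V) : ℕ :=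
  sInf {n | ∃ d : TreeDecomp H, d.width = n}

namespace Multigraph

/-- The multigraph obtained from the path on `k` vertices by replacing every
edge with `m` parallel edges. -/
def pathMulti (k m : ℕ) : Multigraph (Fin k) where
  mul i j := if i.val + 1 = j.val ∨ j.val + 1 = i.val then m else 0
  symm := by intro u v; simp only [or_comm]
  loopless := by
    intro v
    have h : ¬(v.val + 1 = v.val ∨ v.val + 1 = v.val) := by omega
    simp [h]

end Multigraph


section Aux

open Multigraph Finset

/-- Any reachability-invariant under adjacency is preserved. -/
lemma aux_reachable_invariant {V : Type*} {G : SimpleGraph V} (f : V → Prop)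
    (h : ∀ u v, G.Adj u v → (f u ↔ f v)) {u v : V} (hr : G.Reachable u v) :
    f u ↔ f v := by
  obtain ⟨w⟩ := hr
  induction w with
  | nil => rfl
  | cons ha _ ih => exact (h _ _ ha).trans ih

lemma aux_pathGraph_isAcyclic (n : ℕ) : (SimpleGraph.pathGraph n).IsAcyclic := by
  rw [SimpleGraph.isAcyclic_iff_forall_adj_isBridge]
  intro v w hvw
  rw [SimpleGraph.isBridge_iff]
  intro hr
  have hadj := SimpleGraph.pathGraph_adj.mp hvw
  set i := min v.val w.val with hi
  have hinv : ∀ a b : Fin n,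
      (SimpleGraph.pathGraph n \ SimpleGraph.fromEdgeSet {s(v, w)}).Adj a b →
      ((a.val ≤ i) ↔ (b.val ≤ i)) := by
    intro a b hab
    obtain ⟨hab1, hab2⟩ := hab
    have hab1' := SimpleGraph.pathGraph_adj.mp hab1
    have hne : ¬ ((a = v ∧ b = w) ∨ (a = w ∧ b = v)) := by
      intro hc
      apply hab2
      rw [SimpleGraph.fromEdgeSet_adj]
      refine ⟨?_, hab1.ne⟩
      simp only [Set.mem_singleton_iff, Sym2.eq_iff]
      tauto
    simp only [not_or, not_and, Fin.ext_iff] at hne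
    omega
  have key := aux_reachable_invariant (fun u : Fin n => u.val ≤ i) hinv hr
  omega

/-- Boolean step lemma: a boolean sequence changing value changes at a step. -/
lemma aux_bool_step (p : ℕ → Bool) : ∀ n, p 0 ≠ p n → ∃ j, j < n ∧ p j ≠ p (j + 1) := by
  intro n
  induction n with
  | zero => intro h; exact absurd rfl h
  | succ n ih =>
    intro h
    by_cases hc : p n = p (n + 1)
    · obtain ⟨j, hj, hne⟩ := ih (fun h0 => h (h0.trans hc))
      exact ⟨j, hj.trans (Nat.lt_succ_self n), hne⟩
    · exact ⟨n, Nat.lt_succ_self n, hc⟩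

lemma aux_exists_boundary {k : ℕ} (A : Finset (Fin k)) (h1 : A.Nonempty)
    (h2 : Aᶜ.Nonempty) :
    ∃ u v : Fin k, u ∈ A ∧ v ∈ Aᶜ ∧ (u.val + 1 = v.val ∨ v.val + 1 = u.val) := by
  classical
  obtain ⟨a, ha⟩ := h1
  obtain ⟨b, hb⟩ := h2
  have hb' : b ∉ A := Finset.mem_compl.mp hb
  set p : ℕ → Bool := fun j => if h : j < k then decide ((⟨j, h⟩ : Fin k) ∈ A) else false
    with hp
  have hpa : p a.val = true := by simp [hp, a.isLt, Fin.eta, ha]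
  have hpb : p b.val = false := by simp [hp, b.isLt, Fin.eta, hb']
  have main : ∀ j, j + 1 < k → p j ≠ p (j + 1) →
      ∃ u v : Fin k, u ∈ A ∧ v ∈ Aᶜ ∧ (u.val + 1 = v.val ∨ v.val + 1 = u.val) := by
    intro j hj1 hne
    have hj0 : j < k := by omega
    have e1 : p j = decide ((⟨j, hj0⟩ : Fin k) ∈ A) := by simp [hp, hj0]
    have e2 : p (j + 1) = decide ((⟨j + 1, hj1⟩ : Fin k) ∈ A) := by simp [hp, hj1]
    rw [e1, e2] at hne
    by_cases hu : (⟨j, hj0⟩ : Fin k) ∈ A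
    · have hv : (⟨j + 1, hj1⟩ : Fin k) ∉ A := by
        intro hv; apply hne; simp [hu, hv]
      exact ⟨⟨j, hj0⟩, ⟨j + 1, hj1⟩, hu, Finset.mem_compl.mpr hv, Or.inl rfl⟩
    · have hv : (⟨j + 1, hj1⟩ : Fin k) ∈ A := by
        by_contra hv; apply hne; simp [hu, hv]
      exact ⟨⟨j + 1, hj1⟩, ⟨j, hj0⟩, hv, Finset.mem_compl.mpr hu, Or.inr rfl⟩
  by_cases h0 : p 0 = true
  · obtain ⟨j, hj, hne⟩ := aux_bool_step p b.val (by rw [h0, hpb]; simp)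
    exact main j (by have := b.isLt; omega) hne
  · obtain ⟨j, hj, hne⟩ := aux_bool_step p a.val
      (by rw [hpa]; simpa using h0)
    exact main j (by have := a.isLt; omega) hne

lemma aux_cut_ge {k : ℕ} (A : Finset (Fin k)) (h1 : A.Nonempty) (h2 : Aᶜ.Nonempty) :
    k ≤ (pathMulti k k).cut A := by
  obtain ⟨u, v, hu, hv, hadj⟩ := aux_exists_boundary A h1 h2
  have hmul : (pathMulti k k).mul u v = k := by simp [pathMulti, hadj]
  have step1 : (pathMulti k k).mul u v ≤ ∑ w ∈ Aᶜ, (pathMulti k k).mul u w :=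
    Finset.single_le_sum (f := fun w => (pathMulti k k).mul u w)
      (fun i _ => Nat.zero_le _) hv
  have step2 : (∑ w ∈ Aᶜ, (pathMulti k k).mul u w) ≤ (pathMulti k k).cut A :=
    Finset.single_le_sum (f := fun x => ∑ w ∈ Aᶜ, (pathMulti k k).mul x w)
      (fun i _ => Nat.zero_le _) hu
  calc k = (pathMulti k k).mul u v := hmul.symm
    _ ≤ _ := step1
    _ ≤ _ := step2

lemma aux_connSubset_singleton {V : Type} [Fintype V] [DecidableEq V]
    (G : Multigraph V) (v : V) : G.ConnSubset {v} := by
  refine ⟨⟨v, Finset.mem_singleton_self v⟩, ?_⟩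
  rw [SimpleGraph.connected_iff]
  constructor
  · intro a b
    have : a = b := by
      apply Subtype.ext
      have ha := a.2
      have hb := b.2
      simp only [Finset.coe_singleton, Set.mem_singleton_iff] at ha hb
      rw [ha, hb]
    rw [this]
  · exact ⟨⟨v, by simp⟩⟩

lemma aux_simple_eq {k : ℕ} (hk : 2 ≤ k) :
    (pathMulti k k).simple = SimpleGraph.pathGraph k := by
  ext u v
  simp only [Multigraph.simple, pathMulti, SimpleGraph.pathGraph_adj]
  split
  · omega
  · simp_all

/-- The standard width-1 tree decomposition of the path graph. -/
def auxDecomp (k : ℕ) (hk : 2 ≤ k) : TreeDecomp (SimpleGraph.pathGraph k) where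
  ι := Fin k
  tree := SimpleGraph.pathGraph k
  isTree := by
    refine ⟨(SimpleGraph.connected_iff _).mpr
      ⟨SimpleGraph.pathGraph_preconnected k, ⟨⟨0, by omega⟩⟩⟩, aux_pathGraph_isAcyclic k⟩
  bag := fun i => {(⟨i.val - 1, Nat.lt_of_le_of_lt (Nat.sub_le _ _) i.isLt⟩ : Fin k), i}
  cover := fun v => ⟨v, by simp⟩
  coverEdge := by
    intro u v huv
    have hmem : ∀ (a i : Fin k),
        a ∈ ({(⟨i.val - 1, Nat.lt_of_le_of_lt (Nat.sub_le _ _) i.isLt⟩ : Fin k), i} :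
          Finset (Fin k)) ↔ (a.val = i.val - 1 ∨ a = i) := by
      intro a i; simp [Fin.ext_iff]
    rcases SimpleGraph.pathGraph_adj.mp huv with h | h
    · exact ⟨v, (hmem u v).mpr (Or.inl (by omega)), (hmem v v).mpr (Or.inr rfl)⟩
    · exact ⟨u, (hmem u u).mpr (Or.inr rfl), (hmem v u).mpr (Or.inl (by omega))⟩
  coherent := by
    intro v
    rw [SimpleGraph.connected_iff]
    constructor
    · rintro ⟨a, ha⟩ ⟨b, hb⟩
      simp only [Set.mem_setOf_eq, Finset.mem_insert, Finset.mem_singleton,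
        Fin.ext_iff] at ha hb
      by_cases hab : a = b
      · subst hab; rfl
      · have hab' : a.val ≠ b.val := fun hc => hab (Fin.ext hc)
        have hadj : (SimpleGraph.pathGraph k).Adj a b := by
          rw [SimpleGraph.pathGraph_adj]
          omega
        exact SimpleGraph.Adj.reachable hadj
    · exact ⟨⟨v, by simp⟩⟩

lemma auxDecomp_width (k : ℕ) (hk : 2 ≤ k) : (auxDecomp k hk).width = 1 := by
  have hsup : (Finset.univ : Finset (Fin k)).sup
      (fun i => ((auxDecomp k hk).bag i).card) = 2 := by
    apply le_antisymm
    · apply Finset.sup_le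
      intro i _
      calc ((auxDecomp k hk).bag i).card ≤ _ + 1 := Finset.card_insert_le _ _
        _ ≤ 2 := by simp
    · refine le_trans ?_ (Finset.le_sup (Finset.mem_univ (⟨1, by omega⟩ : Fin k)))
      show 2 ≤ (({(⟨1 - 1, _⟩ : Fin k), ⟨1, by omega⟩} : Finset (Fin k))).card
      rw [Finset.card_pair (by simp [Fin.ext_iff])]
  show (Finset.univ : Finset (Fin k)).sup (fun i => ((auxDecomp k hk).bag i).card) - 1 = 1
  omega

end Aux

open Multigraph in
/-- For `k ≥ 2`, the multigraph obtained from the path on `k` vertices by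
replacing each edge with `k` parallel edges has scramble number `k` but
treewidth `1`; in particular, the scramble number is unbounded in terms of the
treewidth. -/
theorem scrambleNumber_pathMulti (k : ℕ) (hk : 2 ≤ k) :
    scrambleNumber (pathMulti k k) = k ∧ treewidth (pathMulti k k).simple = 1 := by
  constructor
  · -- scramble number = k
    classical
    have hcard : (Finset.univ : Finset (Fin k)).card = k := by simp
    -- the singleton scramble
    set S : Finset (Finset (Fin k)) :=
      (Finset.univ : Finset (Fin k)).image (fun v => {v}) with hS
    have hmemS : ∀ E, E ∈ S ↔ ∃ v : Fin k, E = {v} := by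
      intro E
      simp [hS, eq_comm]
    have hscr : IsScramble (pathMulti k k) S := by
      intro E hE
      obtain ⟨v, rfl⟩ := (hmemS E).mp hE
      exact aux_connSubset_singleton _ v
    have hvalid : ValidOrder (pathMulti k k) S k := by
      constructor
      · intro C hC
        have hsub : (Finset.univ : Finset (Fin k)) ⊆ C := by
          intro v _
          have := hC {v} ((hmemS _).mpr ⟨v, rfl⟩)
          obtain ⟨x, hx⟩ := this
          rw [Finset.mem_inter, Finset.mem_singleton] at hx
          rw [← hx.1]; exact hx.2
        calc k = (Finset.univ : Finset (Fin k)).card := hcard.symm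
          _ ≤ C.card := Finset.card_le_card hsub
      · rintro A ⟨E, hE, hEA⟩ ⟨E', hE', hE'A⟩
        obtain ⟨v, rfl⟩ := (hmemS E).mp hE
        obtain ⟨w, rfl⟩ := (hmemS E').mp hE'
        have h1 : A.Nonempty := ⟨v, hEA (Finset.mem_singleton_self v)⟩
        have h2 : Aᶜ.Nonempty := ⟨w, hE'A (Finset.mem_singleton_self w)⟩
        exact aux_cut_ge A h1 h2
    -- every valid order (for any scramble) is at most k
    have hbound : ∀ (S' : Finset (Finset (Fin k))), IsScramble (pathMulti k k) S' →
        ∀ m, ValidOrder (pathMulti k k) S' m → m ≤ k := by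
      intro S' hscr' m hm
      have hhit : IsHitting S' Finset.univ := by
        intro E hE
        obtain ⟨⟨x, hx⟩, -⟩ := hscr' E hE
        exact ⟨x, Finset.mem_inter.mpr ⟨hx, Finset.mem_univ x⟩⟩
      calc m ≤ (Finset.univ : Finset (Fin k)).card := hm.1 _ hhit
        _ = k := hcard
    have horder : scrambleOrder (pathMulti k k) S = k := by
      apply le_antisymm
      · exact csSup_le ⟨k, hvalid⟩ (fun m hm => hbound S hscr m hm)
      · exact le_csSup ⟨k, fun m hm => hbound S hscr m hm⟩ hvalid
    have hub : ∀ n ∈ {n | ∃ S, IsScramble (pathMulti k k) S ∧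
        scrambleOrder (pathMulti k k) S = n}, n ≤ k := by
      rintro n ⟨S', hscr', rfl⟩
      have h0 : ValidOrder (pathMulti k k) S' 0 :=
        ⟨fun C _ => Nat.zero_le _, fun A _ _ => Nat.zero_le _⟩
      exact csSup_le ⟨0, h0⟩ (fun m hm => hbound S' hscr' m hm)
    have hmem : k ∈ {n | ∃ S, IsScramble (pathMulti k k) S ∧
        scrambleOrder (pathMulti k k) S = n} := ⟨S, hscr, horder⟩
    exact le_antisymm (csSup_le ⟨k, hmem⟩ hub)
      (le_csSup ⟨k, fun n hn => hub n hn⟩ hmem)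
  · -- treewidth = 1
    classical
    rw [aux_simple_eq hk]
    have hub : (1 : ℕ) ∈ {n | ∃ d : TreeDecomp (SimpleGraph.pathGraph k), d.width = n} :=
      ⟨auxDecomp k hk, auxDecomp_width k hk⟩
    apply le_antisymm
    · exact Nat.sInf_le hub
    · apply le_csInf ⟨1, hub⟩
      rintro n ⟨d', rfl⟩
      have hadj01 : (SimpleGraph.pathGraph k).Adj ⟨0, by omega⟩ ⟨1, by omega⟩ := by
        rw [SimpleGraph.pathGraph_adj]; left; rfl
      obtain ⟨i, hi0, hi1⟩ := d'.coverEdge _ _ hadj01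
      have h2 : 2 ≤ (d'.bag i).card := by
        have hsub : ({⟨0, by omega⟩, ⟨1, by omega⟩} : Finset (Fin k)) ⊆ d'.bag i := by
          intro x hx
          rcases Finset.mem_insert.mp hx with rfl | hx
          · exact hi0
          · rw [Finset.mem_singleton] at hx; subst hx; exact hi1
        calc 2 = ({⟨0, by omega⟩, ⟨1, by omega⟩} : Finset (Fin k)).card := by
              rw [Finset.card_pair (by simp [Fin.ext_iff])]
          _ ≤ _ := Finset.card_le_card hsub
      have hle : 2 ≤ (@Finset.univ d'.ι d'.fin).sup (fun j => (d'.bag j).card) :=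
        le_trans h2 (Finset.le_sup (f := fun j => (d'.bag j).card)
          (@Finset.mem_univ _ d'.fin i))
      show 1 ≤ (@Finset.univ d'.ι d'.fin).sup (fun j => (d'.bag j).card) - 1
      omega
end
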